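/- arXiv:math/0204034 — 6 statements merged into one kernel-verified Lean document; each statement's English description precedes it below -/
import Mathlib

section
/- The operator S on L^2(T) defined by (Sf)(z) = m(z) f(z^N) with m ∈ L^∞(T) is an isometry if and only if (1/N) Σ_{w^N = z} |m(w)|^2 = 1 for almost all z ∈ T. -/
open MeasureTheory ComplexConjugate

noncomputable instance : MeasurableSpace Circle := borel Circle
instance : BorelSpace Circle := ⟨rfl⟩

open Set Function Real Filter
open scoped ENNReal NNReal

noncomputable instance : DecidableEq Circle := Classical.decEq _

namespace IsometryAux

lemma circle_exp_pow (x : ℝ) (n : ℕ) : Circle.exp (n * x) = Circle.exp x ^ n := by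
  induction n with
  | zero => simp
  | succ k ih =>
    have h : ((k + 1 : ℕ) : ℝ) * x = (k : ℝ) * x + x := by push_cast; ring
    rw [h, Circle.exp_add, ih, pow_succ]

lemma pow_surjective {N : ℕ} (hN : N ≠ 0) :
    Function.Surjective (fun z : Circle => z ^ N) := by
  intro z
  refine ⟨Circle.exp (Complex.arg (z : ℂ) / N), ?_⟩
  have h : (N : ℝ) * (Complex.arg (z : ℂ) / N) = Complex.arg (z : ℂ) := by
    field_simp
  simp only []
  rw [← circle_exp_pow, h, Circle.exp_arg]

noncomputable def K (N : ℕ) : Finset Circle :=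
  (Finset.range N).image fun k : ℕ => Circle.exp (2 * π * (k : ℝ) / N)

lemma pow_eq_one_of_mem_K {N : ℕ} (hN : N ≠ 0) {ζ : Circle} (hζ : ζ ∈ K N) :
    ζ ^ N = 1 := by
  obtain ⟨k, hk, rfl⟩ := Finset.mem_image.1 hζ
  rw [← circle_exp_pow]
  have h : (N : ℝ) * (2 * π * k / N) = 2 * π * ((k : ℤ) : ℝ) := by
    have : (N : ℝ) ≠ 0 := Nat.cast_ne_zero.2 hN
    field_simp
    norm_cast
  rw [h, Circle.exp_two_pi_mul_int]

lemma mem_K_of_pow_eq_one {N : ℕ} (hN : N ≠ 0) {ζ : Circle} (h : ζ ^ N = 1) :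
    ζ ∈ K N := by
  have hNR : (N : ℝ) ≠ 0 := Nat.cast_ne_zero.2 hN
  have h1 : Circle.exp ((N : ℝ) * Complex.arg (ζ : ℂ)) = 1 := by
    rw [circle_exp_pow, Circle.exp_arg, h]
  obtain ⟨j, hj⟩ := Circle.exp_eq_one.1 h1
  have hNZ : (0 : ℤ) < (N : ℤ) := by exact_mod_cast Nat.pos_of_ne_zero hN
  have hdm := Int.mul_ediv_add_emod j (N : ℤ)
  obtain ⟨q, k, hjqk, hk0, hkN⟩ :
      ∃ q k : ℤ, j = q * N + k ∧ 0 ≤ k ∧ k < N :=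
    ⟨j / N, j % N, by linarith, Int.emod_nonneg j (by exact_mod_cast hN),
      Int.emod_lt_of_pos j hNZ⟩
  refine Finset.mem_image.2 ⟨k.toNat, Finset.mem_range.2 (by omega), ?_⟩
  have hkt : ((k.toNat : ℕ) : ℝ) = (k : ℝ) := by
    rw [← Int.cast_natCast]
    congr 1
    omega
  have harg : Complex.arg (ζ : ℂ) = j * (2 * π) / N := by
    field_simp at hj ⊢
    linarith [hj]
  rw [← Circle.exp_arg ζ, harg]
  apply Circle.exp_eq_exp.2
  refine ⟨-q, ?_⟩
  rw [hkt]
  have : (j : ℝ) = (q : ℝ) * N + k := by exact_mod_cast hjqk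
  rw [this]
  push_cast
  field_simp
  ring

lemma card_K {N : ℕ} (hN : N ≠ 0) : (K N).card = N := by
  rw [K, Finset.card_image_of_injOn, Finset.card_range]
  intro a ha b hb hab
  simp only [Finset.coe_range, Set.mem_Iio] at ha hb
  obtain ⟨mm, hm⟩ := Circle.exp_eq_exp.1 hab
  have hNR : (N : ℝ) ≠ 0 := Nat.cast_ne_zero.2 hN
  have hπ : (2 : ℝ) * π ≠ 0 := by positivity
  have h2 : 2 * π * (a : ℝ) = 2 * π * ((b : ℝ) + mm * N) := by
    field_simp at hm
    linear_combination (2 * π) * hm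
  have h3 : (a : ℝ) = (b : ℝ) + mm * N := mul_left_cancel₀ hπ h2
  have h4 : (a : ℤ) = (b : ℤ) + mm * N := by exact_mod_cast h3
  have hNZ : (0 : ℤ) < (N : ℤ) := by exact_mod_cast Nat.pos_of_ne_zero hN
  have haN : (a : ℤ) < N := by exact_mod_cast ha
  have hbN : (b : ℤ) < N := by exact_mod_cast hb
  have hb0 : (0 : ℤ) ≤ (b : ℤ) := Int.natCast_nonneg b
  have ha0 : (0 : ℤ) ≤ (a : ℤ) := Int.natCast_nonneg a
  have hub : mm * N < N := by linarith
  have hlb : -(N : ℤ) < mm * N := by linarith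
  have hmm0 : mm = 0 := by
    by_contra hne
    have h1 : 1 ≤ |mm| := Int.one_le_abs hne
    have habs : |mm * N| < N := abs_lt.2 ⟨hlb, hub⟩
    rw [abs_mul, abs_of_nonneg hNZ.le] at habs
    nlinarith
  have : (a : ℤ) = (b : ℤ) := by rw [hmm0] at h4; simpa using h4
  exact_mod_cast this

lemma fiber_eq {N : ℕ} (hN : N ≠ 0) (z : Circle) :
    {w : Circle | w ^ N = z ^ N} = ↑((K N).image fun ζ => ζ * z) := by
  ext w
  simp only [Set.mem_setOf_eq, Finset.coe_image, Set.mem_image, Finset.mem_coe]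
  constructor
  · intro h
    refine ⟨w / z, mem_K_of_pow_eq_one hN ?_, div_mul_cancel w z⟩
    rw [div_pow, h, div_self']
  · rintro ⟨ζ, hζ, rfl⟩
    rw [mul_pow, pow_eq_one_of_mem_K hN hζ, one_mul]

lemma G_comp_pow {N : ℕ} (hN : N ≠ 0) (m : Circle → ℂ) (z : Circle) :
    (N : ℝ)⁻¹ * ∑ᶠ w ∈ {w : Circle | w ^ N = z ^ N}, ‖m w‖ ^ 2
      = (N : ℝ)⁻¹ * ∑ ζ ∈ K N, ‖m (ζ * z)‖ ^ 2 := by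
  rw [fiber_eq hN, finsum_mem_coe_finset]
  congr 1
  apply Finset.sum_image
  intro a _ b _ h
  exact mul_right_cancel h

section Measure

variable {N : ℕ} (μ : Measure Circle) [μ.IsHaarMeasure]

lemma measurePreserving_pow (hN : N ≠ 0) :
    MeasurePreserving (fun z : Circle => z ^ N) μ μ := by
  have h := (powMonoidHom N : Circle →* Circle).measurePreserving (μ := μ) (ν := μ)
    (continuous_pow N) (by simpa [powMonoidHom] using pow_surjective hN) rfl
  simpa [powMonoidHom] using h

noncomputable def sec (N : ℕ) (z : Circle) : Circle :=
  Circle.exp (Complex.arg (z : ℂ) / N)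

lemma sec_pow (hN : N ≠ 0) (z : Circle) : sec N z ^ N = z := by
  have h : (N : ℝ) * (Complex.arg (z : ℂ) / N) = Complex.arg (z : ℂ) := by
    have : (N : ℝ) ≠ 0 := Nat.cast_ne_zero.2 hN
    field_simp
  rw [sec, ← circle_exp_pow, h, Circle.exp_arg]

lemma measurable_sec (N : ℕ) : Measurable (sec N) := by
  apply Measurable.comp Circle.exp.continuous.measurable
  apply Measurable.div_const
  apply Measurable.comp Complex.measurable_arg
  exact Continuous.borel_measurable continuous_subtype_val

lemma sec_qmp (hN : N ≠ 0) : Measure.QuasiMeasurePreserving (sec N) μ μ := by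
  refine ⟨measurable_sec N, Measure.AbsolutelyContinuous.mk fun E hE hE0 => ?_⟩
  rw [Measure.map_apply (measurable_sec N) hE]
  have h1 : μ ((fun z : Circle => z ^ N) ⁻¹' (sec N ⁻¹' E)) = μ (sec N ⁻¹' E) :=
    (measurePreserving_pow μ hN).measure_preimage
      (hE.preimage (measurable_sec N)).nullMeasurableSet
  have h2 : (fun z : Circle => z ^ N) ⁻¹' (sec N ⁻¹' E) ⊆
      ⋃ ζ ∈ K N, (fun w => ζ * w) ⁻¹' E := by
    intro w hw
    simp only [Set.mem_preimage] at hw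
    have hζK : sec N (w ^ N) / w ∈ K N := by
      apply mem_K_of_pow_eq_one hN
      rw [div_pow, sec_pow hN, div_self']
    refine Set.mem_biUnion hζK ?_
    simp only [Set.mem_preimage]
    rwa [div_mul_cancel]
  have hle : μ (sec N ⁻¹' E) ≤ 0 :=
    calc μ (sec N ⁻¹' E) = μ ((fun z : Circle => z ^ N) ⁻¹' (sec N ⁻¹' E)) := h1.symm
      _ ≤ μ (⋃ ζ ∈ K N, (fun w => ζ * w) ⁻¹' E) := measure_mono h2
      _ ≤ ∑ ζ ∈ K N, μ ((fun w => ζ * w) ⁻¹' E) := measure_biUnion_finset_le _ _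
      _ = 0 := by simp [measure_preimage_mul, hE0]
  exact le_antisymm hle zero_le

lemma lintegral_translate (hN : N ≠ 0) {ζ : Circle} (hζ : ζ ^ N = 1)
    {F h : Circle → ℝ≥0∞} (hF : AEMeasurable F μ) (hh : AEMeasurable h μ) :
    ∫⁻ z, F (ζ * z) * h (z ^ N) ∂μ = ∫⁻ z, F z * h (z ^ N) ∂μ := by
  have hmp := measurePreserving_mul_left μ ζ
  have hG : AEMeasurable (fun w => F w * h (w ^ N)) μ :=
    hF.mul (hh.comp_quasiMeasurePreserving
      (measurePreserving_pow μ hN).quasiMeasurePreserving)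
  have key : ∫⁻ w, F w * h (w ^ N) ∂(Measure.map (fun z => ζ * z) μ)
      = ∫⁻ z, F (ζ * z) * h ((ζ * z) ^ N) ∂μ :=
    lintegral_map' (by rwa [hmp.map_eq]) hmp.aemeasurable
  rw [hmp.map_eq] at key
  have hpt : ∀ z : Circle, F (ζ * z) * h (z ^ N) = F (ζ * z) * h ((ζ * z) ^ N) := by
    intro z; rw [mul_pow, hζ, one_mul]
  calc ∫⁻ z, F (ζ * z) * h (z ^ N) ∂μ
      = ∫⁻ z, F (ζ * z) * h ((ζ * z) ^ N) ∂μ := lintegral_congr hpt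
    _ = ∫⁻ w, F w * h (w ^ N) ∂μ := key.symm

lemma lintegral_Hi (hN : N ≠ 0) {M h : Circle → ℝ≥0∞}
    (hM : AEMeasurable M μ) (hh : AEMeasurable h μ) :
    ∫⁻ z, ((N : ℝ≥0∞)⁻¹ * ∑ ζ ∈ K N, M (ζ * z)) * h (z ^ N) ∂μ
      = ∫⁻ z, M z * h (z ^ N) ∂μ := by
  have hrw : ∀ z, ((N : ℝ≥0∞)⁻¹ * ∑ ζ ∈ K N, M (ζ * z)) * h (z ^ N)
      = (N : ℝ≥0∞)⁻¹ * ∑ ζ ∈ K N, M (ζ * z) * h (z ^ N) := by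
    intro z; rw [mul_assoc, Finset.sum_mul]
  have hterm : ∀ ζ : Circle, AEMeasurable (fun a => M (ζ * a) * h (a ^ N)) μ := fun ζ =>
    (hM.comp_quasiMeasurePreserving
        (measurePreserving_mul_left μ ζ).quasiMeasurePreserving).mul
      (hh.comp_quasiMeasurePreserving
        (measurePreserving_pow μ hN).quasiMeasurePreserving)
  simp only [hrw]
  rw [lintegral_const_mul' _ _ (by simp [hN])]
  rw [lintegral_finset_sum' (K N) fun ζ _ => hterm ζ]
  rw [Finset.sum_congr rfl fun ζ hζ =>
    lintegral_translate μ hN (pow_eq_one_of_mem_K hN hζ) hM hh]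
  rw [Finset.sum_const, card_K hN, nsmul_eq_mul, ← mul_assoc,
    ENNReal.inv_mul_cancel (by exact_mod_cast hN) (by simp), one_mul]

end Measure

noncomputable def Gfun (N : ℕ) (m : Circle → ℂ) (z : Circle) : ℝ :=
  (N : ℝ)⁻¹ * ∑ᶠ w ∈ {w : Circle | w ^ N = z}, ‖m w‖ ^ 2

noncomputable def Hr (N : ℕ) (m : Circle → ℂ) (z : Circle) : ℝ :=
  (N : ℝ)⁻¹ * ∑ ζ ∈ K N, ‖m (ζ * z)‖ ^ 2

noncomputable def Mf (m : Circle → ℂ) (z : Circle) : ℝ≥0∞ :=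
  (‖m z‖₊ : ℝ≥0∞) ^ 2

noncomputable def Hi (N : ℕ) (m : Circle → ℂ) (z : Circle) : ℝ≥0∞ :=
  (N : ℝ≥0∞)⁻¹ * ∑ ζ ∈ K N, Mf m (ζ * z)

lemma Gfun_comp_pow {N : ℕ} (hN : N ≠ 0) (m : Circle → ℂ) (z : Circle) :
    Gfun N m (z ^ N) = Hr N m z :=
  G_comp_pow hN m z

lemma Hi_eq_ofReal {N : ℕ} (hN : N ≠ 0) (m : Circle → ℂ) (z : Circle) :
    Hi N m z = ENNReal.ofReal (Hr N m z) := by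
  have hNpos : (0 : ℝ) < N := by exact_mod_cast Nat.pos_of_ne_zero hN
  simp only [Hi, Hr, Mf]
  rw [ENNReal.ofReal_mul (by positivity),
    ENNReal.ofReal_sum_of_nonneg (fun i _ => by positivity)]
  congr 1
  · rw [ENNReal.ofReal_inv_of_pos hNpos, ENNReal.ofReal_natCast]
  · exact Finset.sum_congr rfl fun ζ _ => by
      rw [ENNReal.ofReal_pow (norm_nonneg _), ofReal_norm, enorm_eq_nnnorm]

section Measure2

variable {N : ℕ} (μ : Measure Circle) [μ.IsHaarMeasure]

lemma norm_char (hN : N ≠ 0)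
    (m : Circle → ℂ) (hm : MemLp m ⊤ μ) (g f : Lp ℂ 2 μ)
    (hgf : (g : Circle → ℂ) =ᵐ[μ] fun z => m z * f (z ^ N)) :
    ‖g‖ = ‖f‖ ↔
      ∫⁻ z, Hi N m z * (‖f (z ^ N)‖₊ : ℝ≥0∞) ^ 2 ∂μ
        = ∫⁻ z, (‖f (z ^ N)‖₊ : ℝ≥0∞) ^ 2 ∂μ := by
  have hp := measurePreserving_pow μ hN
  have hMm : AEMeasurable (fun z => (‖m z‖₊ : ℝ≥0∞) ^ 2) μ :=
    hm.aestronglyMeasurable.enorm.pow_const 2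
  have hnf : AEMeasurable (fun z => (‖f z‖₊ : ℝ≥0∞) ^ 2) μ :=
    (Lp.aestronglyMeasurable f).enorm.pow_const 2
  have hmap : ∫⁻ z, (‖f z‖₊ : ℝ≥0∞) ^ 2 ∂μ = ∫⁻ z, (‖f (z ^ N)‖₊ : ℝ≥0∞) ^ 2 ∂μ := by
    have h := lintegral_map' (f := fun z : Circle => (‖f z‖₊ : ℝ≥0∞) ^ 2)
      (g := fun z : Circle => z ^ N) (by rwa [hp.map_eq]) hp.aemeasurable
    rw [hp.map_eq] at h
    exact h
  have hB : ∫⁻ z, Hi N m z * (‖f (z ^ N)‖₊ : ℝ≥0∞) ^ 2 ∂μ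
      = ∫⁻ z, (‖m z‖₊ : ℝ≥0∞) ^ 2 * (‖f (z ^ N)‖₊ : ℝ≥0∞) ^ 2 ∂μ := by
    have h := lintegral_Hi μ hN hMm hnf
    simpa only [Hi, Mf] using h
  rw [Lp.norm_def, Lp.norm_def,
    ENNReal.toReal_eq_toReal_iff' (Lp.eLpNorm_ne_top _) (Lp.eLpNorm_ne_top _),
    eLpNorm_congr_ae hgf,
    eLpNorm_eq_lintegral_rpow_enorm_toReal two_ne_zero ENNReal.ofNat_ne_top,
    eLpNorm_eq_lintegral_rpow_enorm_toReal two_ne_zero ENNReal.ofNat_ne_top]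
  rw [show ((2 : ℝ≥0∞)).toReal = ((2 : ℕ) : ℝ) by simp]
  simp_rw [ENNReal.rpow_natCast, enorm_eq_nnnorm]
  rw [(ENNReal.rpow_left_injective (by norm_num : (1 / ((2 : ℕ) : ℝ)) ≠ 0)).eq_iff]
  simp_rw [nnnorm_mul, ENNReal.coe_mul, mul_pow]
  rw [← hB, hmap]

end Measure2

end IsometryAux

/-- $Sf(z)=m(z)f(z^N)$ is an isometry of $L^2(\mathbb{T})$ iff
$\frac1N\sum_{w^N=z}|m(w)|^2=1$ a.e. -/
theorem isometry_iff (N : ℕ) (hN : 2 ≤ N) (μ : Measure Circle) [μ.IsHaarMeasure]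
    [IsProbabilityMeasure μ] (m : Circle → ℂ) (hm : MemLp m ⊤ μ)
    (S : Lp ℂ 2 μ →L[ℂ] Lp ℂ 2 μ)
    (hS : ∀ f : Lp ℂ 2 μ, (S f : Circle → ℂ) =ᵐ[μ] fun z => m z * f (z ^ N)) :
    Isometry S ↔
      (fun z => (N : ℝ)⁻¹ * ∑ᶠ w ∈ {w : Circle | w ^ N = z}, ‖m w‖ ^ 2)
        =ᵐ[μ] fun _ => (1 : ℝ) := by
  classical
  have hNz : N ≠ 0 := by omega
  have hp := IsometryAux.measurePreserving_pow μ hNz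
  have hsec := IsometryAux.sec_qmp μ hNz
  have hGp : ∀ z : Circle, IsometryAux.Gfun N m (z ^ N) = IsometryAux.Hr N m z :=
    fun z => IsometryAux.Gfun_comp_pow hNz m z
  have hGsec : ∀ z : Circle, IsometryAux.Hr N m (IsometryAux.sec N z) = IsometryAux.Gfun N m z :=
    fun z => by rw [← hGp (IsometryAux.sec N z), IsometryAux.sec_pow hNz]
  have equiv1 : (IsometryAux.Gfun N m =ᵐ[μ] fun _ => (1 : ℝ)) ↔
      (IsometryAux.Hr N m =ᵐ[μ] fun _ => (1 : ℝ)) := by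
    constructor
    · intro h
      filter_upwards [hp.quasiMeasurePreserving.ae_eq h] with z hz
      have h1 : IsometryAux.Gfun N m (z ^ N) = 1 := hz
      rw [← hGp z] at *
      exact h1
    · intro h
      filter_upwards [hsec.ae_eq h] with z hz
      have h1 : IsometryAux.Hr N m (IsometryAux.sec N z) = 1 := hz
      rw [← hGsec z]
      exact h1
  have equiv2 : (IsometryAux.Hr N m =ᵐ[μ] fun _ => (1 : ℝ)) ↔
      (IsometryAux.Hi N m =ᵐ[μ] fun _ => (1 : ℝ≥0∞)) := by
    constructor
    · intro h
      filter_upwards [h] with z hz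
      rw [IsometryAux.Hi_eq_ofReal hNz, hz]
      simp
    · intro h
      filter_upwards [h] with z hz
      rw [IsometryAux.Hi_eq_ofReal hNz] at hz
      exact ENNReal.ofReal_eq_one.1 hz
  have hM : AEMeasurable (IsometryAux.Mf m) μ :=
    hm.aestronglyMeasurable.enorm.pow_const 2
  have hHiA : AEMeasurable (IsometryAux.Hi N m) μ := by
    apply AEMeasurable.const_mul
    exact Finset.aemeasurable_fun_sum _ fun ζ _ =>
      hM.comp_quasiMeasurePreserving (measurePreserving_mul_left μ ζ).quasiMeasurePreserving
  have hGiHi : ∀ z : Circle,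
      IsometryAux.Hi N m (IsometryAux.sec N (z ^ N)) = IsometryAux.Hi N m z := by
    intro z
    rw [IsometryAux.Hi_eq_ofReal hNz, IsometryAux.Hi_eq_ofReal hNz]
    congr 1
    rw [hGsec (z ^ N), ← hGp z]
  constructor
  · intro hIso
    have hGi : AEMeasurable (fun z => IsometryAux.Hi N m (IsometryAux.sec N z)) μ :=
      hHiA.comp_quasiMeasurePreserving hsec
    have key : ∀ A : Set Circle, MeasurableSet A →
        ∫⁻ z in A, IsometryAux.Hi N m (IsometryAux.sec N z) ∂μ = μ A := by
      intro A hA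
      set f : Lp ℂ 2 μ := indicatorConstLp 2 hA (measure_ne_top μ A) (1 : ℂ) with hfdef
      have hnorm : ‖S f‖ = ‖f‖ := (AddMonoidHomClass.isometry_iff_norm S).1 hIso f
      have hf := (IsometryAux.norm_char μ hNz m hm (S f) f (hS f)).1 hnorm
      have hind : (fun z => ((‖f z‖₊ : ℝ≥0∞)) ^ 2) =ᵐ[μ] A.indicator (fun _ => 1) := by
        filter_upwards [indicatorConstLp_coeFn
          (p := 2) (hs := hA) (hμs := measure_ne_top μ A) (c := (1 : ℂ))] with z hz
        rw [hz]
        by_cases hzA : z ∈ A <;> simp [hzA]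
      have hindp : (fun z : Circle => ((‖f (z ^ N)‖₊ : ℝ≥0∞)) ^ 2)
          =ᵐ[μ] fun z => A.indicator (fun _ => 1) (z ^ N) :=
        hp.quasiMeasurePreserving.ae_eq hind
      have e1 : ∫⁻ z, IsometryAux.Hi N m z * (‖f (z ^ N)‖₊ : ℝ≥0∞) ^ 2 ∂μ
          = ∫⁻ z, IsometryAux.Hi N m z * A.indicator (fun _ => 1) (z ^ N) ∂μ := by
        apply lintegral_congr_ae
        filter_upwards [hindp] with z hz
        rw [hz]
      have e2 : ∫⁻ z, (‖f (z ^ N)‖₊ : ℝ≥0∞) ^ 2 ∂μ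
          = ∫⁻ z, A.indicator (fun _ => 1) (z ^ N) ∂μ := lintegral_congr_ae hindp
      rw [e1, e2] at hf
      have e3 : ∫⁻ z, A.indicator (fun _ => (1 : ℝ≥0∞)) (z ^ N) ∂μ = μ A := by
        have h4 : ∀ z : Circle, A.indicator (fun _ => (1 : ℝ≥0∞)) (z ^ N)
            = ((fun w : Circle => w ^ N) ⁻¹' A).indicator (fun _ => 1) z := by
          intro z
          by_cases hz : z ^ N ∈ A <;>
            simp [Set.indicator, hz, Set.mem_preimage]
        simp_rw [h4]
        rw [lintegral_indicator (hA.preimage hp.measurable), setLIntegral_one]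
        exact hp.measure_preimage hA.nullMeasurableSet
      have e5 : ∫⁻ z, IsometryAux.Hi N m z * A.indicator (fun _ => (1 : ℝ≥0∞)) (z ^ N) ∂μ
          = ∫⁻ z, (fun w => IsometryAux.Hi N m (IsometryAux.sec N w)
              * A.indicator (fun _ => (1 : ℝ≥0∞)) w) (z ^ N) ∂μ := by
        apply lintegral_congr
        intro z
        simp only []
        rw [hGiHi]
      have e6 : ∫⁻ z, (fun w => IsometryAux.Hi N m (IsometryAux.sec N w)
              * A.indicator (fun _ => (1 : ℝ≥0∞)) w) (z ^ N) ∂μ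
          = ∫⁻ w, IsometryAux.Hi N m (IsometryAux.sec N w)
              * A.indicator (fun _ => (1 : ℝ≥0∞)) w ∂μ := by
        have h := lintegral_map' (f := fun w => IsometryAux.Hi N m (IsometryAux.sec N w)
            * A.indicator (fun _ => (1 : ℝ≥0∞)) w)
          (g := fun z : Circle => z ^ N)
          (by rw [hp.map_eq]; exact hGi.mul (measurable_const.indicator hA).aemeasurable)
          hp.aemeasurable
        rw [hp.map_eq] at h
        exact h.symm
      have e7 : ∫⁻ w, IsometryAux.Hi N m (IsometryAux.sec N w)
              * A.indicator (fun _ => (1 : ℝ≥0∞)) w ∂μ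
          = ∫⁻ w in A, IsometryAux.Hi N m (IsometryAux.sec N w) ∂μ := by
        have h8 : ∀ w, IsometryAux.Hi N m (IsometryAux.sec N w)
              * A.indicator (fun _ => (1 : ℝ≥0∞)) w
            = A.indicator (fun w => IsometryAux.Hi N m (IsometryAux.sec N w)) w := by
          intro w
          by_cases hw : w ∈ A <;> simp [hw]
        simp_rw [h8]
        exact lintegral_indicator hA _
      rw [e5, e6, e7, e3] at hf
      exact hf
    have hGi1 : (fun z => IsometryAux.Hi N m (IsometryAux.sec N z)) =ᵐ[μ] fun _ => 1 :=
      ae_eq_of_forall_setLIntegral_eq_of_sigmaFinite₀ hGi aemeasurable_const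
        fun A hA _ => by rw [key A hA, setLIntegral_one]
    have hHi1 : IsometryAux.Hi N m =ᵐ[μ] fun _ => 1 := by
      filter_upwards [hp.quasiMeasurePreserving.ae_eq hGi1] with z hz
      have h1 : IsometryAux.Hi N m (IsometryAux.sec N (z ^ N)) = 1 := hz
      rw [← hGiHi z]
      exact h1
    exact equiv1.2 (equiv2.2 hHi1)
  · intro hae
    have hae' : IsometryAux.Gfun N m =ᵐ[μ] fun _ => (1 : ℝ) := hae
    have hHi1 : IsometryAux.Hi N m =ᵐ[μ] fun _ => 1 := equiv2.1 (equiv1.1 hae')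
    apply AddMonoidHomClass.isometry_of_norm S
    intro f
    rw [IsometryAux.norm_char μ hNz m hm (S f) f (hS f)]
    apply lintegral_congr_ae
    filter_upwards [hHi1] with z hz
    rw [hz, one_mul]
end

section
/- Given m_1, m_2 ∈ L^∞(T) and the operators S_i f(z) = m_i(z) f(z^N) on L^2(T), the operators S_1 and S_2 have orthogonal ranges (i.e., S_1* S_2 = 0) if and only if (1/N) Σ_{w^N = z} conj(m_1(w)) m_2(w) = 0 for almost all z ∈ T. -/
open MeasureTheory ComplexConjugate
open scoped Real

namespace OrthRangesAux

lemma circle_coe_cont : Continuous (fun z : Circle => (z : ℂ)) := by exact continuous_subtype_val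

lemma meas_coe : Measurable (fun z : Circle => (z : ℂ)) := circle_coe_cont.measurable

lemma circle_coe_pow (z : Circle) (n : ℕ) : ((z ^ n : Circle) : ℂ) = (z : ℂ) ^ n := by
  induction n with
  | zero => simp
  | succ n ih => rw [pow_succ, pow_succ, Circle.coe_mul, ih]

lemma exp_pow (t : ℝ) (n : ℕ) : Circle.exp t ^ n = Circle.exp (n * t) := by
  induction n with
  | zero => simp
  | succ n ih => rw [pow_succ, ih, ← Circle.exp_add]; congr 1; push_cast; ring

/-- A measurable section of `z ↦ z ^ N`. -/
noncomputable def rho (N : ℕ) : Circle → Circle := fun z => Circle.exp (Complex.arg z / N)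

lemma rho_meas (N : ℕ) : Measurable (rho N) :=
  Circle.exp.continuous.measurable.comp ((Complex.measurable_arg.comp meas_coe).div_const _)

lemma rho_pow {N : ℕ} (hN : N ≠ 0) (z : Circle) : rho N z ^ N = z := by
  rw [rho, exp_pow, mul_div_cancel₀ _ (by exact_mod_cast hN : (N:ℝ) ≠ 0), Circle.exp_arg]

lemma pow_surj {N : ℕ} (hN : N ≠ 0) : Function.Surjective (fun z : Circle => z ^ N) :=
  fun z => ⟨rho N z, rho_pow hN z⟩

/-- A primitive `N`-th root of unity in the circle. -/
noncomputable def zt (N : ℕ) : Circle := Circle.exp (2 * π / N)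

lemma zt_coe (N : ℕ) : ((zt N : Circle) : ℂ) = Complex.exp (2 * ↑π * Complex.I / N) := by
  rw [zt, Circle.coe_exp]; congr 1; push_cast; ring

lemma zt_prim {N : ℕ} (hN : N ≠ 0) : IsPrimitiveRoot ((zt N : Circle) : ℂ) N := by
  rw [zt_coe]; exact Complex.isPrimitiveRoot_exp N hN

lemma zt_pow_N {N : ℕ} (hN : N ≠ 0) : zt N ^ N = 1 := by
  apply Circle.coe_injective
  rw [circle_coe_pow, (zt_prim hN).pow_eq_one, Circle.coe_one]

lemma pow_rot {N : ℕ} (hN : N ≠ 0) (j : ℕ) (u : Circle) : (zt N ^ j * u) ^ N = u ^ N := by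
  rw [mul_pow, ← pow_mul, mul_comm j N, pow_mul, zt_pow_N hN, one_pow, one_mul]

lemma fiber_iff {N : ℕ} (hN : N ≠ 0) (u w : Circle) :
    w ^ N = u ^ N ↔ ∃ j < N, w = zt N ^ j * u := by
  constructor
  · intro h
    haveI : NeZero N := ⟨hN⟩
    have h1 : ((w * u⁻¹ : Circle) : ℂ) ^ N = 1 := by
      rw [← circle_coe_pow, mul_pow, h, inv_pow]
      norm_cast
      simp
    obtain ⟨j, hj, hj2⟩ := (zt_prim hN).eq_pow_of_pow_eq_one h1
    refine ⟨j, hj, ?_⟩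
    apply Circle.coe_injective
    rw [Circle.coe_mul, circle_coe_pow, hj2, Circle.coe_mul, Circle.coe_inv]
    field_simp
  · rintro ⟨j, hj, rfl⟩
    exact pow_rot hN j u

lemma zt_inj {N : ℕ} (hN : N ≠ 0) {i j : ℕ} (hi : i < N) (hj : j < N) (u : Circle)
    (h : zt N ^ i * u = zt N ^ j * u) : i = j := by
  have h2 : zt N ^ i = zt N ^ j := mul_right_cancel h
  have h3 : ((zt N : Circle) : ℂ) ^ i = ((zt N : Circle) : ℂ) ^ j := by
    rw [← circle_coe_pow, ← circle_coe_pow, h2]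
  exact (zt_prim hN).pow_inj hi hj h3

lemma finsum_fiber {N : ℕ} (hN : N ≠ 0) (k : Circle → ℂ) (u : Circle) :
    ∑ᶠ w ∈ {w : Circle | w ^ N = u ^ N}, k w = ∑ j ∈ Finset.range N, k (zt N ^ j * u) := by
  classical
  have hset : {w : Circle | w ^ N = u ^ N}
      = ↑((Finset.range N).image fun j => zt N ^ j * u) := by
    ext w
    simp only [Set.mem_setOf_eq, Finset.coe_image, Set.mem_image, Finset.mem_coe,
      Finset.mem_range, fiber_iff hN u w]
    constructor
    · rintro ⟨j, hj, rfl⟩; exact ⟨j, hj, rfl⟩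
    · rintro ⟨j, hj, rfl⟩; exact ⟨j, hj, rfl⟩
  rw [hset, finsum_mem_coe_finset, Finset.sum_image]
  intro i hi j hj h
  exact zt_inj hN (Finset.mem_range.mp hi) (Finset.mem_range.mp hj) u h

section Measure

variable {N : ℕ} (μ : Measure Circle) [μ.IsHaarMeasure] [IsProbabilityMeasure μ]

lemma mp (hN : N ≠ 0) : MeasurePreserving (fun z : Circle => z ^ N) μ μ := by
  have hmeas : Measurable (fun z : Circle => z ^ N) := (continuous_pow N).measurable
  have h1 : (Measure.map (fun z : Circle => z ^ N) μ).IsHaarMeasure :=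
    Measure.isHaarMeasure_map_of_isFiniteMeasure μ (powMonoidHom N) (continuous_pow N)
      (pow_surj hN)
  have h2 : IsProbabilityMeasure (Measure.map (fun z : Circle => z ^ N) μ) :=
    Measure.isProbabilityMeasure_map hmeas.aemeasurable
  exact ⟨hmeas, Measure.isHaarMeasure_eq_of_isProbabilityMeasure _ μ⟩

lemma rho_preimage (hN : N ≠ 0) {s : Set Circle} (hs : μ s = 0) : μ (rho N ⁻¹' s) = 0 := by
  set t := toMeasurable μ s with ht_def
  have hts : s ⊆ t := subset_toMeasurable _ _
  have ht : μ t = 0 := by rw [ht_def, measure_toMeasurable]; exact hs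
  have htm : MeasurableSet t := measurableSet_toMeasurable _ _
  have hsub : (fun u : Circle => u ^ N) ⁻¹' (rho N ⁻¹' t)
      ⊆ ⋃ j ∈ Finset.range N, (fun u => zt N ^ j * u) ⁻¹' t := by
    intro u hu
    obtain ⟨j, hj, hj2⟩ := (fiber_iff hN u (rho N (u ^ N))).mp (rho_pow hN (u ^ N))
    refine Set.mem_biUnion (Finset.mem_range.mpr hj) ?_
    simpa [← hj2] using hu
  have h1 : μ (rho N ⁻¹' t) = μ ((fun u : Circle => u ^ N) ⁻¹' (rho N ⁻¹' t)) :=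
    ((mp μ hN).measure_preimage ((rho_meas N) htm).nullMeasurableSet).symm
  have h2 : μ ((fun u : Circle => u ^ N) ⁻¹' (rho N ⁻¹' t)) = 0 := by
    refine le_antisymm (le_trans (measure_mono hsub) ?_) zero_le
    refine le_trans (measure_biUnion_finset_le _ _) ?_
    have hz : ∀ j ∈ Finset.range N, μ ((fun u => zt N ^ j * u) ⁻¹' t) = 0 := fun j _ => by
      rw [measure_preimage_mul]; exact ht
    rw [Finset.sum_congr rfl hz]
    simp
  exact le_antisymm
    (le_trans (measure_mono (Set.preimage_mono hts)) (le_of_eq (h1.trans h2))) zero_le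

lemma pow_null (hN : N ≠ 0) {s : Set Circle} (h : μ ((fun u : Circle => u ^ N) ⁻¹' s) = 0) :
    μ s = 0 := by
  have hsub : s ⊆ rho N ⁻¹' ((fun u : Circle => u ^ N) ⁻¹' s) := by
    intro z hz
    simp only [Set.mem_preimage, rho_pow hN z]
    exact hz
  exact le_antisymm (le_trans (measure_mono hsub) (le_of_eq (rho_preimage μ hN h))) zero_le

lemma ae_pow (hN : N ≠ 0) {p : Circle → Prop} (h : ∀ᵐ z ∂μ, p z) : ∀ᵐ u ∂μ, p (u ^ N) :=
  (mp μ hN).quasiMeasurePreserving.preimage_null h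

lemma ae_of_ae_pow (hN : N ≠ 0) {p : Circle → Prop} (h : ∀ᵐ u ∂μ, p (u ^ N)) :
    ∀ᵐ z ∂μ, p z :=
  pow_null μ hN h

lemma ae_rho_pow (hN : N ≠ 0) {p : Circle → Prop} (h : ∀ᵐ z ∂μ, p z) :
    ∀ᵐ u ∂μ, p (rho N (u ^ N)) :=
  (mp μ hN).quasiMeasurePreserving.preimage_null (rho_preimage μ hN h)

lemma ae_rot (c : Circle) {p : Circle → Prop} (h : ∀ᵐ z ∂μ, p z) : ∀ᵐ u ∂μ, p (c * u) :=
  (measurePreserving_mul_left μ c).quasiMeasurePreserving.preimage_null h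

lemma integral_rot (c : Circle) (G : Circle → ℂ) : ∫ u, G (c * u) ∂μ = ∫ z, G z ∂μ :=
  (measurePreserving_mul_left μ c).integral_comp
    (Homeomorph.measurableEmbedding (Homeomorph.mulLeft c)) G

end Measure

end OrthRangesAux

open OrthRangesAux

/-- $S_1, S_2$ have orthogonal ranges iff $\frac1N\sum_{w^N=z}\overline{m_1(w)}m_2(w)=0$ a.e. -/
theorem orthogonal_ranges_iff (N : ℕ) (hN : 2 ≤ N) (μ : Measure Circle) [μ.IsHaarMeasure]
    [IsProbabilityMeasure μ] (m₁ m₂ : Circle → ℂ) (hm₁ : MemLp m₁ ⊤ μ) (hm₂ : MemLp m₂ ⊤ μ)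
    (S₁ S₂ : Lp ℂ 2 μ →L[ℂ] Lp ℂ 2 μ)
    (hS₁ : ∀ f : Lp ℂ 2 μ, (S₁ f : Circle → ℂ) =ᵐ[μ] fun z => m₁ z * f (z ^ N))
    (hS₂ : ∀ f : Lp ℂ 2 μ, (S₂ f : Circle → ℂ) =ᵐ[μ] fun z => m₂ z * f (z ^ N)) :
    ContinuousLinearMap.adjoint S₁ * S₂ = 0 ↔
      (fun z => (N : ℂ)⁻¹ * ∑ᶠ w ∈ {w : Circle | w ^ N = z}, conj (m₁ w) * m₂ w)
        =ᵐ[μ] fun _ => (0 : ℂ) := by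
  have hN0 : N ≠ 0 := by omega
  have hNC : (N : ℂ) ≠ 0 := Nat.cast_ne_zero.mpr hN0
  have hNR : (N : ℝ) ≠ 0 := Nat.cast_ne_zero.mpr hN0
  set K : Circle → ℂ := fun z => conj (m₁ z) * m₂ z with hK_def
  set Mf : Circle → ℂ :=
    fun z => (N : ℂ)⁻¹ * ∑ᶠ w ∈ {w : Circle | w ^ N = z}, conj (m₁ w) * m₂ w with hMf_def
  have hMcomp : ∀ u : Circle,
      Mf (u ^ N) = (N : ℂ)⁻¹ * ∑ j ∈ Finset.range N, K (zt N ^ j * u) := by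
    intro u
    rw [hMf_def]
    exact congrArg _ (finsum_fiber hN0 K u)
  -- a.e. bound on K
  obtain ⟨C, hC0, hKC⟩ : ∃ C : ℝ, 0 ≤ C ∧ ∀ᵐ z ∂μ, ‖K z‖ ≤ C := by
    have h1 : eLpNormEssSup m₁ μ ≠ ⊤ := by
      have := hm₁.2; rw [eLpNorm_exponent_top] at this; exact this.ne
    have h2 : eLpNormEssSup m₂ μ ≠ ⊤ := by
      have := hm₂.2; rw [eLpNorm_exponent_top] at this; exact this.ne
    refine ⟨(eLpNormEssSup m₁ μ).toReal * (eLpNormEssSup m₂ μ).toReal,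
      mul_nonneg ENNReal.toReal_nonneg ENNReal.toReal_nonneg, ?_⟩
    filter_upwards [ae_le_eLpNormEssSup (f := m₁) (μ := μ),
      ae_le_eLpNormEssSup (f := m₂) (μ := μ)] with z hz1 hz2
    have e1 : ‖m₁ z‖ ≤ (eLpNormEssSup m₁ μ).toReal := by
      have := ENNReal.toReal_mono h1 hz1
      simpa using this
    have e2 : ‖m₂ z‖ ≤ (eLpNormEssSup m₂ μ).toReal := by
      have := ENNReal.toReal_mono h2 hz2
      simpa using this
    have : ‖K z‖ = ‖m₁ z‖ * ‖m₂ z‖ := by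
      rw [hK_def]; simp [norm_mul]
    rw [this]
    exact mul_le_mul e1 e2 (norm_nonneg _) ENNReal.toReal_nonneg
  have hKaesm : AEStronglyMeasurable K μ :=
    (RCLike.continuous_conj.comp_aestronglyMeasurable hm₁.1).mul hm₂.1
  have hK_rot_aesm : ∀ c : Circle, AEStronglyMeasurable (fun u => K (c * u)) μ := fun c =>
    hKaesm.comp_quasiMeasurePreserving (measurePreserving_mul_left μ c).quasiMeasurePreserving
  have hKC_rot : ∀ j : ℕ, ∀ᵐ u ∂μ, ‖K (zt N ^ j * u)‖ ≤ C := fun j =>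
    ae_rot μ (zt N ^ j) hKC
  -- rotation invariance of the relevant integrals
  have hrot_int : ∀ (h : Circle → ℂ) (j : ℕ),
      ∫ u, K (zt N ^ j * u) * h (u ^ N) ∂μ = ∫ z, K z * h (z ^ N) ∂μ := by
    intro h j
    have := integral_rot μ (zt N ^ j) (fun v => K v * h (v ^ N))
    rw [← this]
    refine integral_congr_ae (Filter.Eventually.of_forall fun u => ?_)
    simp only [pow_rot hN0]
  -- the key change-of-variables identity
  have key : ∀ h : Circle → ℂ, Integrable (fun u => h (u ^ N)) μ →
      ∫ z, K z * h (z ^ N) ∂μ = ∫ u, Mf (u ^ N) * h (u ^ N) ∂μ := by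
    intro h hint
    have hterm_int : ∀ j : ℕ, Integrable (fun u => K (zt N ^ j * u) * h (u ^ N)) μ := fun j =>
      Integrable.bdd_mul hint (hK_rot_aesm _) (hKC_rot j)
    have e1 : ∫ z, K z * h (z ^ N) ∂μ
        = (N : ℂ)⁻¹ * ∑ j ∈ Finset.range N, ∫ u, K (zt N ^ j * u) * h (u ^ N) ∂μ := by
      rw [Finset.sum_congr rfl fun j _ => hrot_int h j, Finset.sum_const, Finset.card_range,
        nsmul_eq_mul, ← mul_assoc, inv_mul_cancel₀ hNC, one_mul]
    rw [e1, ← integral_finset_sum _ fun j _ => hterm_int j, ← integral_const_mul]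
    refine integral_congr_ae (Filter.Eventually.of_forall fun u => ?_)
    simp only [hMcomp, mul_assoc, Finset.sum_mul]
  -- the inner product formula
  have hinner : ∀ f g : Lp ℂ 2 μ, (inner ℂ (S₁ f) (S₂ g) : ℂ)
      = ∫ z, K z * (conj ((f : Circle → ℂ) (z ^ N)) * (g : Circle → ℂ) (z ^ N)) ∂μ := by
    intro f g
    rw [MeasureTheory.L2.inner_def]
    refine integral_congr_ae ?_
    filter_upwards [hS₁ f, hS₂ g] with z h1 h2
    rw [RCLike.inner_apply, h1, h2, hK_def]
    simp only [map_mul]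
    ring
  constructor
  · -- orthogonality implies the a.e. vanishing
    intro hO
    have horto : ∀ f g : Lp ℂ 2 μ, (inner ℂ (S₁ f) (S₂ g) : ℂ) = 0 := by
      intro f g
      have h0 : (ContinuousLinearMap.adjoint S₁) (S₂ g) = 0 := by
        have := ContinuousLinearMap.ext_iff.mp hO g
        simpa using this
      rw [← ContinuousLinearMap.adjoint_inner_right, h0, inner_zero_right]
    -- test against indicator functions
    have hEint : ∀ E : Set Circle, MeasurableSet E →
        ∫ u, Mf (u ^ N) * E.indicator (fun _ => (1 : ℂ)) (u ^ N) ∂μ = 0 := by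
      intro E hE
      set fE : Lp ℂ 2 μ := indicatorConstLp 2 hE (measure_ne_top μ E) (1 : ℂ) with hfE_def
      have hcoe : (fE : Circle → ℂ) =ᵐ[μ] E.indicator fun _ => (1 : ℂ) := indicatorConstLp_coeFn
      have hcomp : ∀ᵐ u ∂μ,
          (fE : Circle → ℂ) (u ^ N) = E.indicator (fun _ => (1 : ℂ)) (u ^ N) :=
        ae_pow μ hN0 hcoe
      have hind_int : Integrable (fun u => E.indicator (fun _ => (1 : ℂ)) (u ^ N)) μ := by
        have h0 : Integrable (E.indicator fun _ => (1 : ℂ)) μ := (integrable_const 1).indicator hE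
        exact ((mp μ hN0).integrable_comp h0.aestronglyMeasurable).mpr h0
      have hI : (inner ℂ (S₁ fE) (S₂ fE) : ℂ)
          = ∫ z, K z * E.indicator (fun _ => (1 : ℂ)) (z ^ N) ∂μ := by
        rw [hinner fE fE]
        refine integral_congr_ae ?_
        filter_upwards [hcomp] with z hz
        rw [hz]
        by_cases hmem : z ^ N ∈ E <;> simp [Set.indicator_apply, hmem]
      rw [← key _ hind_int, ← hI, horto]
    -- pass to a measurable representative constant on fibers
    have hW_aesm : AEStronglyMeasurable (fun u => Mf (u ^ N)) μ := by
      rw [show (fun u : Circle => Mf (u ^ N))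
          = fun u => (N : ℂ)⁻¹ * ∑ j ∈ Finset.range N, K (zt N ^ j * u) from funext hMcomp]
      exact (Finset.aestronglyMeasurable_fun_sum _ fun j _ => hK_rot_aesm _).const_mul _
    set W : Circle → ℂ := hW_aesm.mk _ with hW_def
    have hWsm : StronglyMeasurable W := hW_aesm.stronglyMeasurable_mk
    have hWeq : (fun u => Mf (u ^ N)) =ᵐ[μ] W := hW_aesm.ae_eq_mk
    set V : Circle → ℂ := fun z => W (rho N z) with hV_def
    have hVsm : StronglyMeasurable V := hWsm.comp_measurable (rho_meas N)
    have hVpow : (fun u => V (u ^ N)) =ᵐ[μ] fun u => Mf (u ^ N) := by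
      have h3 : ∀ᵐ u ∂μ, Mf ((rho N (u ^ N)) ^ N) = W (rho N (u ^ N)) :=
        ae_rho_pow μ hN0 hWeq
      filter_upwards [h3] with u hu
      rw [hV_def]
      simp only
      rw [← hu, rho_pow hN0]
    -- boundedness of V
    have hWb : ∀ᵐ u ∂μ, ‖Mf (u ^ N)‖ ≤ C := by
      have hall : ∀ᵐ u ∂μ, ∀ j ∈ Finset.range N, ‖K (zt N ^ j * u)‖ ≤ C :=
        (ae_ball_iff (Finset.range N : Finset ℕ).countable_toSet).mpr fun j _ => hKC_rot j
      filter_upwards [hall] with u hu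
      rw [hMcomp u]
      calc ‖(N : ℂ)⁻¹ * ∑ j ∈ Finset.range N, K (zt N ^ j * u)‖
          = (N : ℝ)⁻¹ * ‖∑ j ∈ Finset.range N, K (zt N ^ j * u)‖ := by
            rw [norm_mul, norm_inv, Complex.norm_natCast]
        _ ≤ (N : ℝ)⁻¹ * (N * C) := by
            refine mul_le_mul_of_nonneg_left ?_ (by positivity)
            refine le_trans (norm_sum_le _ _) ?_
            calc ∑ j ∈ Finset.range N, ‖K (zt N ^ j * u)‖
                ≤ ∑ _j ∈ Finset.range N, C := Finset.sum_le_sum hu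
              _ = N * C := by rw [Finset.sum_const, Finset.card_range, nsmul_eq_mul]
        _ = C := by field_simp
    have hVb : ∀ᵐ z ∂μ, ‖V z‖ ≤ C := by
      refine ae_of_ae_pow μ hN0 (p := fun z => ‖V z‖ ≤ C) ?_
      filter_upwards [hVpow, hWb] with u h1 h2
      rw [h1]; exact h2
    have hV_int : Integrable V μ :=
      Integrable.mono' (integrable_const C) hVsm.aestronglyMeasurable hVb
    -- all set integrals of V vanish
    have hVset : ∀ E : Set Circle, MeasurableSet E → μ E < ⊤ → ∫ z in E, V z ∂μ = 0 := by
      intro E hE _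
      rw [← integral_indicator hE]
      have e1 : ∫ z, E.indicator V z ∂μ
          = ∫ z, V z * E.indicator (fun _ => (1 : ℂ)) z ∂μ :=
        integral_congr_ae (Filter.Eventually.of_forall fun z => by
          by_cases h : z ∈ E <;> simp [Set.indicator_apply, h])
      have hmap := (mp μ hN0).map_eq
      have haesm : AEStronglyMeasurable (fun z => V z * E.indicator (fun _ => (1 : ℂ)) z)
          (Measure.map (fun u : Circle => u ^ N) μ) := by
        rw [hmap]
        exact hVsm.aestronglyMeasurable.mul
          ((stronglyMeasurable_const.indicator hE).aestronglyMeasurable)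
      have e2 := integral_map ((continuous_pow N).measurable.aemeasurable) haesm
      rw [hmap] at e2
      have e3 : ∫ u, V (u ^ N) * E.indicator (fun _ => (1 : ℂ)) (u ^ N) ∂μ
          = ∫ u, Mf (u ^ N) * E.indicator (fun _ => (1 : ℂ)) (u ^ N) ∂μ := by
        refine integral_congr_ae ?_
        filter_upwards [hVpow] with u hu
        rw [hu]
      rw [e1, e2, e3, hEint E hE]
    have hV0 : V =ᵐ[μ] 0 := hV_int.ae_eq_zero_of_forall_setIntegral_eq_zero hVset
    have hMpow0 : ∀ᵐ u ∂μ, Mf (u ^ N) = 0 := by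
      have hVpow0 : ∀ᵐ u ∂μ, V (u ^ N) = 0 := ae_pow μ hN0 hV0
      filter_upwards [hVpow, hVpow0] with u h1 h2
      rw [← h1, h2]
    exact ae_of_ae_pow μ hN0 (p := fun z => Mf z = 0) hMpow0
  · -- the a.e. vanishing implies orthogonality
    intro hM
    have hMc : ∀ᵐ u ∂μ, Mf (u ^ N) = 0 := ae_pow μ hN0 (p := fun z => Mf z = 0) hM
    refine ContinuousLinearMap.ext fun g => ?_
    rw [ContinuousLinearMap.mul_apply, ContinuousLinearMap.zero_apply]
    refine ext_inner_left (𝕜 := ℂ) (E := Lp ℂ 2 μ) fun f => ?_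
    rw [inner_zero_right, ContinuousLinearMap.adjoint_inner_right, hinner f g]
    set h : Circle → ℂ := fun z => conj ((f : Circle → ℂ) z) * (g : Circle → ℂ) z with hh_def
    have h_int : Integrable h μ := by
      have := MeasureTheory.L2.integrable_inner (𝕜 := ℂ) f g
      simpa [RCLike.inner_apply, hh_def, mul_comm] using this
    have hh_int : Integrable (fun u => h (u ^ N)) μ :=
      ((mp μ hN0).integrable_comp h_int.aestronglyMeasurable).mpr h_int
    have : ∫ z, K z * (conj ((f : Circle → ℂ) (z ^ N)) * (g : Circle → ℂ) (z ^ N)) ∂μ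
        = ∫ z, K z * h (z ^ N) ∂μ := rfl
    rw [this, key h hh_int]
    refine integral_eq_zero_of_ae ?_
    filter_upwards [hMc] with u hu
    simp [hu]
end

section
/- For m_1, m_2 ∈ L^∞(T) and the operators S_i f(z) = m_i(z) f(z^N) on L^2(T), the composition S_1* S_2 is the operator of multiplication by the function z ↦ (1/N) Σ_{w^N = z} conj(m_1(w)) m_2(w). -/
open MeasureTheory ComplexConjugate

namespace AdjointCompAux

noncomputable def zeta (N : ℕ) : Circle := Circle.exp (2 * Real.pi / N)

noncomputable def sec (N : ℕ) (z : Circle) : Circle := Circle.exp ((z : ℂ).arg / N)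

lemma coe_pow (z : Circle) (n : ℕ) : ((z ^ n : Circle) : ℂ) = (z : ℂ) ^ n := by
  induction n with
  | zero => simp
  | succ n ih => rw [pow_succ, pow_succ, ← ih]; rfl

lemma exp_pow (t : ℝ) (n : ℕ) : Circle.exp t ^ n = Circle.exp (n * t) := by
  induction n with
  | zero => simp [Circle.exp_zero]
  | succ n ih =>
    rw [pow_succ, ih, ← Circle.exp_add]
    congr 1
    push_cast
    ring

lemma zeta_coe {N : ℕ} (hN : N ≠ 0) :
    ((zeta N : Circle) : ℂ) = Complex.exp (2 * Real.pi * Complex.I / N) := by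
  rw [zeta, Circle.coe_exp]
  congr 1
  push_cast
  ring

lemma zeta_pow_N {N : ℕ} (hN : N ≠ 0) : zeta N ^ N = 1 := by
  ext
  rw [coe_pow, zeta_coe hN]
  simpa using (Complex.isPrimitiveRoot_exp N hN).pow_eq_one

lemma sec_pow {N : ℕ} (hN : N ≠ 0) (z : Circle) : sec N z ^ N = z := by
  rw [sec, exp_pow]
  rw [mul_div_cancel₀ _ (by exact_mod_cast hN : (N : ℝ) ≠ 0)]
  exact Circle.exp_arg z

lemma root_eq {N : ℕ} (hN : N ≠ 0) {u : Circle} (hu : u ^ N = 1) :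
    ∃ k < N, zeta N ^ k = u := by
  haveI : NeZero N := ⟨hN⟩
  have hu' : (u : ℂ) ^ N = 1 := by
    rw [← coe_pow, hu]; rfl
  obtain ⟨i, hi, hiu⟩ := (Complex.isPrimitiveRoot_exp N hN).eq_pow_of_pow_eq_one hu'
  exact ⟨i, hi, by ext; rw [coe_pow, zeta_coe hN, hiu]⟩

lemma fiber_rel {N : ℕ} (hN : N ≠ 0) {u w : Circle} (h : u ^ N = w ^ N) :
    ∃ k < N, u = zeta N ^ k * w := by
  have : (u / w) ^ N = 1 := by
    rw [div_pow, h, div_self']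
  obtain ⟨k, hk, hku⟩ := root_eq hN this
  refine ⟨k, hk, ?_⟩
  rw [hku, div_mul_cancel]

lemma zeta_pow_inj {N : ℕ} (hN : N ≠ 0) {i j : ℕ} (hi : i < N) (hj : j < N)
    (h : zeta N ^ i = zeta N ^ j) : i = j := by
  refine (Complex.isPrimitiveRoot_exp N hN).pow_inj hi hj ?_
  rw [← zeta_coe hN, ← coe_pow, ← coe_pow, h]

lemma rot_pow {N : ℕ} (hN : N ≠ 0) (k : ℕ) (z : Circle) :
    (zeta N ^ k * z) ^ N = z ^ N := by
  rw [mul_pow, ← pow_mul, mul_comm k N, pow_mul, zeta_pow_N hN, one_pow, one_mul]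

lemma measurable_coe : Measurable (fun z : Circle => (z : ℂ)) := by
  have hc : Continuous (fun z : Circle => (z : ℂ)) := continuous_induced_dom
  exact Continuous.measurable (α := Circle) hc

lemma measurable_sec (N : ℕ) : Measurable (sec N) := by
  exact (map_continuous Circle.exp).measurable.comp
    ((Complex.measurable_arg.comp measurable_coe).div_const _)

lemma measurePreserving_pow {N : ℕ} (hN : N ≠ 0) (μ : Measure Circle)
    [μ.IsHaarMeasure] [IsProbabilityMeasure μ] :
    MeasurePreserving (fun z : Circle => z ^ N) μ μ := by
  have hc : Continuous fun z : Circle => z ^ N := continuous_pow N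
  have hm : Measurable fun z : Circle => z ^ N := hc.measurable
  have hsurj : Function.Surjective (⇑(powMonoidHom N : Circle →* Circle)) :=
    fun z => ⟨sec N z, sec_pow hN z⟩
  haveI : (Measure.map (fun z : Circle => z ^ N) μ).IsHaarMeasure :=
    Measure.isHaarMeasure_map_of_isFiniteMeasure μ (powMonoidHom N) hc hsurj
  haveI : IsProbabilityMeasure (Measure.map (fun z : Circle => z ^ N) μ) :=
    Measure.isProbabilityMeasure_map hm.aemeasurable
  exact ⟨hm, Measure.isHaarMeasure_eq_of_isProbabilityMeasure _ _⟩

lemma null_image_pow {N : ℕ} (hN : N ≠ 0) (μ : Measure Circle)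
    [μ.IsHaarMeasure] [IsProbabilityMeasure μ] {A : Set Circle} (hA : μ A = 0) :
    μ ((fun z : Circle => z ^ N) '' A) = 0 := by
  obtain ⟨B, hAB, hBm, hB0⟩ := exists_measurable_superset_of_null hA
  set B' : Set Circle := ⋃ k : ℕ, (fun w => zeta N ^ k * w) ⁻¹' B with hB'def
  have hmem : ∀ w : Circle, w ∈ B' ↔ ∃ k : ℕ, zeta N ^ k * w ∈ B := by
    intro w; simp [hB'def]
  have hB'm : MeasurableSet B' :=
    MeasurableSet.iUnion fun k => hBm.preimage (measurable_const_mul _)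
  have hB'0 : μ B' = 0 := by
    refine le_antisymm ((measure_iUnion_le _).trans ?_) (zero_le)
    have : ∀ k : ℕ, μ ((fun w => zeta N ^ k * w) ⁻¹' B) = 0 := fun k => by
      rw [(measurePreserving_mul_left μ (zeta N ^ k)).measure_preimage
        hBm.nullMeasurableSet, hB0]
    simp [this]
  have himg : (fun z : Circle => z ^ N) '' A ⊆ sec N ⁻¹' B' := by
    rintro z ⟨w, hwA, rfl⟩
    obtain ⟨j, hj, hjw⟩ := fiber_rel hN (sec_pow hN (w ^ N))
    rw [Set.mem_preimage, hmem, hjw]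
    refine ⟨N - j, ?_⟩
    rw [← mul_assoc, ← pow_add, Nat.sub_add_cancel hj.le, zeta_pow_N hN, one_mul]
    exact hAB hwA
  have key : (fun z : Circle => z ^ N) ⁻¹' (sec N ⁻¹' B') = B' := by
    ext u
    simp only [Set.mem_preimage]
    obtain ⟨j, hj, hju⟩ := fiber_rel hN (sec_pow hN (u ^ N))
    rw [hju, hmem, hmem]
    constructor
    · rintro ⟨k, hk⟩
      refine ⟨k + j, ?_⟩
      rw [pow_add, mul_assoc]
      exact hk
    · rintro ⟨k, hk⟩
      refine ⟨k + (N - j), ?_⟩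
      rw [← mul_assoc, ← pow_add, show k + (N - j) + j = k + N by omega, pow_add,
        zeta_pow_N hN, mul_one]
      exact hk
  refine le_antisymm ((measure_mono himg).trans ?_) (zero_le)
  rw [← (measurePreserving_pow hN μ).measure_preimage
    ((measurable_sec N hB'm).nullMeasurableSet), key, hB'0]

end AdjointCompAux

open AdjointCompAux

/-- $S_1^*S_2$ is multiplication by $z\mapsto\frac1N\sum_{w^N=z}\overline{m_1(w)}m_2(w)$. -/
theorem adjoint_comp_is_multiplication (N : ℕ) (hN : 2 ≤ N) (μ : Measure Circle)
    [μ.IsHaarMeasure] [IsProbabilityMeasure μ]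
    (m₁ m₂ : Circle → ℂ) (hm₁ : MemLp m₁ ⊤ μ) (hm₂ : MemLp m₂ ⊤ μ)
    (S₁ S₂ : Lp ℂ 2 μ →L[ℂ] Lp ℂ 2 μ)
    (hS₁ : ∀ f : Lp ℂ 2 μ, (S₁ f : Circle → ℂ) =ᵐ[μ] fun z => m₁ z * f (z ^ N))
    (hS₂ : ∀ f : Lp ℂ 2 μ, (S₂ f : Circle → ℂ) =ᵐ[μ] fun z => m₂ z * f (z ^ N)) :
    ∀ f : Lp ℂ 2 μ, (ContinuousLinearMap.adjoint S₁ (S₂ f) : Circle → ℂ)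
      =ᵐ[μ] fun z =>
        ((N : ℂ)⁻¹ * ∑ᶠ w ∈ {w : Circle | w ^ N = z}, conj (m₁ w) * m₂ w) * f z := by
  intro f
  have hN0 : N ≠ 0 := by omega
  set ζ : Circle := zeta N with hζdef
  set g : Circle → ℂ :=
    fun z => (N : ℂ)⁻¹ * ∑ᶠ w ∈ {w : Circle | w ^ N = z}, conj (m₁ w) * m₂ w with hgdef
  set G : Circle → ℂ :=
    fun z => (N : ℂ)⁻¹ * ∑ k ∈ Finset.range N, conj (m₁ (ζ ^ k * z)) * m₂ (ζ ^ k * z)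
    with hGdef
  -- fiber sums
  have fiber_sum : ∀ (F : Circle → ℂ) (z w₀ : Circle), w₀ ^ N = z →
      ∑ᶠ w ∈ {w : Circle | w ^ N = z}, F w = ∑ k ∈ Finset.range N, F (ζ ^ k * w₀) := by
    intro F z w₀ h
    have hset : {w : Circle | w ^ N = z} = (fun k : ℕ => ζ ^ k * w₀) '' ↑(Finset.range N) := by
      ext w
      simp only [Set.mem_setOf_eq, Set.mem_image, Finset.coe_range, Set.mem_Iio]
      constructor
      · intro hw
        obtain ⟨k, hk, hkw⟩ := fiber_rel hN0 (hw.trans h.symm)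
        exact ⟨k, hk, hkw.symm⟩
      · rintro ⟨k, hk, rfl⟩
        rw [rot_pow hN0, h]
    have hinj : Set.InjOn (fun k : ℕ => ζ ^ k * w₀) ↑(Finset.range N) := by
      intro i hi j hj hij
      simp only [Finset.coe_range, Set.mem_Iio] at hi hj
      exact zeta_pow_inj hN0 hi hj (mul_right_cancel hij)
    rw [hset, finsum_mem_image hinj, finsum_mem_coe_finset]
  have hGp : ∀ z, g (z ^ N) = G z := by
    intro z
    rw [hgdef, hGdef]
    simp only
    rw [fiber_sum _ _ z rfl]
  have hgs : ∀ z, g z = G (sec N z) := by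
    intro z
    conv_lhs => rw [← sec_pow hN0 z]
    exact hGp _
  -- measure-preserving maps
  have hp : MeasurePreserving (fun z : Circle => z ^ N) μ μ := measurePreserving_pow hN0 μ
  have hrot : ∀ k : ℕ, MeasurePreserving (fun z : Circle => ζ ^ k * z) μ μ :=
    fun k => measurePreserving_mul_left μ _
  have transfer : ∀ {A : Set Circle}, μ A = 0 → μ (sec N ⁻¹' A) = 0 := by
    intro A hA
    refine measure_mono_null (fun z hz => ?_) (null_image_pow hN0 μ hA)
    exact ⟨sec N z, hz, sec_pow hN0 z⟩
  -- a.e. bounds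
  set C₁ : ℝ := (eLpNorm m₁ ⊤ μ).toReal with hC₁
  set C₂ : ℝ := (eLpNorm m₂ ⊤ μ).toReal with hC₂
  have habd : ∀ (m : Circle → ℂ), MemLp m ⊤ μ → ∀ᵐ z ∂μ, ‖m z‖ ≤ (eLpNorm m ⊤ μ).toReal := by
    intro m hm
    have hlt : eLpNormEssSup m μ < ⊤ := by
      rw [← eLpNorm_exponent_top]; exact hm.2
    filter_upwards [ae_le_eLpNormEssSup (f := m) (μ := μ)] with z hz
    have := ENNReal.toReal_mono hlt.ne hz
    simpa [eLpNorm_exponent_top] using this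
  have hb₁ : ∀ᵐ z ∂μ, ‖m₁ z‖ ≤ C₁ := habd m₁ hm₁
  have hb₂ : ∀ᵐ z ∂μ, ‖m₂ z‖ ≤ C₂ := habd m₂ hm₂
  have hC₁0 : 0 ≤ C₁ := ENNReal.toReal_nonneg
  have hC₂0 : 0 ≤ C₂ := ENNReal.toReal_nonneg
  -- pull a.e. statements back along rotations
  have hrot_ae : ∀ (k : ℕ) (P : Circle → Prop), (∀ᵐ z ∂μ, P z) →
      ∀ᵐ z ∂μ, P (ζ ^ k * z) := by
    intro k P hP
    refine ae_of_ae_map (hrot k).measurable.aemeasurable ?_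
    rwa [(hrot k).map_eq]
  -- a.e. measurability
  have hm₁s : AEStronglyMeasurable m₁ μ := hm₁.aestronglyMeasurable
  have hm₂s : AEStronglyMeasurable m₂ μ := hm₂.aestronglyMeasurable
  have hterm : ∀ k : ℕ, AEStronglyMeasurable
      (fun z => conj (m₁ (ζ ^ k * z)) * m₂ (ζ ^ k * z)) μ := by
    intro k
    have h1 : AEStronglyMeasurable (fun z => m₁ (ζ ^ k * z)) μ :=
      hm₁s.comp_measurePreserving (hrot k)
    have h2 : AEStronglyMeasurable (fun z => m₂ (ζ ^ k * z)) μ :=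
      hm₂s.comp_measurePreserving (hrot k)
    exact ((Complex.continuous_conj.comp_aestronglyMeasurable h1)).mul h2
  have hGsm : AEStronglyMeasurable G μ := by
    rw [hGdef]
    exact (Finset.aestronglyMeasurable_fun_sum _ fun k _ => hterm k).const_mul _
  have hgsm : AEStronglyMeasurable g μ := by
    obtain ⟨V, hVsm, hGV⟩ := hGsm
    refine ⟨V ∘ sec N, hVsm.comp_measurable (measurable_sec N), ?_⟩
    rw [Filter.EventuallyEq, ae_iff] at hGV ⊢
    refine measure_mono_null (fun z hz => ?_) (transfer hGV)
    simpa [hgs z] using hz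
  -- a.e. bound for G and g
  have hGbd : ∀ᵐ z ∂μ, ‖G z‖ ≤ C₁ * C₂ := by
    have hall : ∀ᵐ z ∂μ, ∀ k ∈ Finset.range N,
        ‖conj (m₁ (ζ ^ k * z)) * m₂ (ζ ^ k * z)‖ ≤ C₁ * C₂ := by
      rw [Filter.eventually_all_finset]
      intro k _
      filter_upwards [hrot_ae k _ hb₁, hrot_ae k _ hb₂] with z h1 h2
      rw [norm_mul, RCLike.norm_conj]
      exact mul_le_mul h1 h2 (norm_nonneg _) hC₁0
    filter_upwards [hall] with z hz
    rw [hGdef]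
    simp only
    rw [norm_mul]
    calc ‖(N : ℂ)⁻¹‖ * ‖∑ k ∈ Finset.range N, conj (m₁ (ζ ^ k * z)) * m₂ (ζ ^ k * z)‖
        ≤ (N : ℝ)⁻¹ * ∑ k ∈ Finset.range N, ‖conj (m₁ (ζ ^ k * z)) * m₂ (ζ ^ k * z)‖ := by
          rw [norm_inv, Complex.norm_natCast]
          exact mul_le_mul_of_nonneg_left (norm_sum_le _ _) (by positivity)
      _ ≤ (N : ℝ)⁻¹ * ∑ k ∈ Finset.range N, C₁ * C₂ := by
          refine mul_le_mul_of_nonneg_left (Finset.sum_le_sum hz) (by positivity)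
      _ = C₁ * C₂ := by
          rw [Finset.sum_const, Finset.card_range, nsmul_eq_mul, ← mul_assoc,
            inv_mul_cancel₀ (by exact_mod_cast hN0 : (N : ℝ) ≠ 0), one_mul]
  have hgbd : ∀ᵐ z ∂μ, ‖g z‖ ≤ C₁ * C₂ := by
    rw [ae_iff] at hGbd ⊢
    refine measure_mono_null (fun z hz => ?_) (transfer hGbd)
    simpa [hgs z] using hz
  have hgtop : MemLp g ⊤ μ := memLp_top_of_bound hgsm _ hgbd
  have hgf : MemLp (g • ((f : Circle → ℂ))) 2 μ := (Lp.memLp f).smul hgtop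
  -- the candidate element of L²
  set w : Lp ℂ 2 μ := hgf.toLp _ with hwdef
  -- main integral identity
  have main : ContinuousLinearMap.adjoint S₁ (S₂ f) = w := by
    refine ext_inner_left ℂ fun h => ?_
    rw [ContinuousLinearMap.adjoint_inner_right, L2.inner_def, L2.inner_def]
    simp only [RCLike.inner_apply']
    set F : Circle → ℂ := fun z => conj (m₁ z * h (z ^ N)) * (m₂ z * f (z ^ N)) with hFdef
    set Φ : Circle → ℂ := fun z => conj (h z) * (g z * f z) with hΦdef
    have hfs : AEStronglyMeasurable (f : Circle → ℂ) μ := Lp.aestronglyMeasurable f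
    have hhs : AEStronglyMeasurable (h : Circle → ℂ) μ := Lp.aestronglyMeasurable h
    have hΦsm : AEStronglyMeasurable Φ μ :=
      (Complex.continuous_conj.comp_aestronglyMeasurable hhs).mul (hgsm.mul hfs)
    -- integrability of F
    have hhp : MemLp (fun z : Circle => (h : Circle → ℂ) (z ^ N)) 2 μ :=
      (Lp.memLp h).comp_measurePreserving hp
    have hfp : MemLp (fun z : Circle => (f : Circle → ℂ) (z ^ N)) 2 μ :=
      (Lp.memLp f).comp_measurePreserving hp
    have hhpc : MemLp (fun z : Circle => conj ((h : Circle → ℂ) (z ^ N))) 2 μ := by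
      refine hhp.of_le (Complex.continuous_conj.comp_aestronglyMeasurable
        hhp.aestronglyMeasurable) ?_
      filter_upwards with z
      simp [RCLike.norm_conj]
    have hinner : Integrable
        (fun z : Circle => conj ((h : Circle → ℂ) (z ^ N)) * (f : Circle → ℂ) (z ^ N)) μ := by
      rw [← memLp_one_iff_integrable]
      have h121 : (1 : ENNReal) / 1 = 1 / 2 + 1 / 2 := by
        rw [ENNReal.div_add_div_same, one_add_one_eq_two,
          ENNReal.div_self (by norm_num) ENNReal.ofNat_ne_top, div_one]
      exact hfp.smul (r := 1) hhpc
    have hFint : Integrable F μ := by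
      have := Integrable.bdd_mul (c := C₁ * C₂) hinner
        ((Complex.continuous_conj.comp_aestronglyMeasurable hm₁s).mul hm₂s)
        (by filter_upwards [hb₁, hb₂] with z h1 h2
            simp only [Pi.mul_apply, Function.comp_apply, norm_mul, RCLike.norm_conj]
            exact mul_le_mul h1 h2 (norm_nonneg _) hC₁0)
      refine this.congr (Filter.Eventually.of_forall fun z => ?_)
      show _ = conj (m₁ z * (h : Circle → ℂ) (z ^ N)) * (m₂ z * (f : Circle → ℂ) (z ^ N))
      simp only [Pi.mul_apply, Function.comp_apply, map_mul]
      ring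
    have hFsm : AEStronglyMeasurable F μ := hFint.aestronglyMeasurable
    -- step A : ∫ Φ = ∫ Φ ∘ pow
    have stepA : ∫ z, Φ z ∂μ = ∫ z, Φ (z ^ N) ∂μ := by
      conv_lhs => rw [← hp.map_eq]
      exact integral_map hp.measurable.aemeasurable (by rwa [hp.map_eq])
    -- step B : pointwise identity
    have stepB : ∀ z : Circle, Φ (z ^ N) =
        (N : ℂ)⁻¹ * ∑ k ∈ Finset.range N, F (ζ ^ k * z) := by
      intro z
      have e1 : ∀ k : ℕ, F (ζ ^ k * z)
          = conj (m₁ (ζ ^ k * z)) * m₂ (ζ ^ k * z)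
            * (conj ((h : Circle → ℂ) (z ^ N)) * (f : Circle → ℂ) (z ^ N)) := by
        intro k
        show conj (m₁ (ζ ^ k * z) * (h : Circle → ℂ) ((ζ ^ k * z) ^ N))
            * (m₂ (ζ ^ k * z) * (f : Circle → ℂ) ((ζ ^ k * z) ^ N)) = _
        rw [rot_pow hN0, map_mul]
        ring
      have e2 : Φ (z ^ N) = conj ((h : Circle → ℂ) (z ^ N))
          * (g (z ^ N) * (f : Circle → ℂ) (z ^ N)) := rfl
      have e3 : G z = (N : ℂ)⁻¹ * ∑ k ∈ Finset.range N,
          conj (m₁ (ζ ^ k * z)) * m₂ (ζ ^ k * z) := rfl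
      calc Φ (z ^ N)
          = conj ((h : Circle → ℂ) (z ^ N))
            * (((N : ℂ)⁻¹ * ∑ k ∈ Finset.range N, conj (m₁ (ζ ^ k * z)) * m₂ (ζ ^ k * z))
              * (f : Circle → ℂ) (z ^ N)) := by rw [e2, hGp z, e3]
        _ = (N : ℂ)⁻¹ * ((∑ k ∈ Finset.range N, conj (m₁ (ζ ^ k * z)) * m₂ (ζ ^ k * z))
              * (conj ((h : Circle → ℂ) (z ^ N)) * (f : Circle → ℂ) (z ^ N))) := by ring
        _ = (N : ℂ)⁻¹ * ∑ k ∈ Finset.range N, conj (m₁ (ζ ^ k * z)) * m₂ (ζ ^ k * z)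
              * (conj ((h : Circle → ℂ) (z ^ N)) * (f : Circle → ℂ) (z ^ N)) := by
            rw [Finset.sum_mul]
        _ = (N : ℂ)⁻¹ * ∑ k ∈ Finset.range N, F (ζ ^ k * z) := by
            rw [Finset.sum_congr rfl fun k _ => (e1 k).symm]
    -- step C : each rotated integral equals ∫ F
    have stepC : ∀ k : ℕ, ∫ z, F (ζ ^ k * z) ∂μ = ∫ z, F z ∂μ := by
      intro k
      exact (hrot k).integral_comp (Homeomorph.measurableEmbedding
        (Homeomorph.mulLeft (ζ ^ k))) F
    have hFrot_int : ∀ k : ℕ, Integrable (fun z => F (ζ ^ k * z)) μ := fun k =>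
      ((hrot k).integrable_comp hFsm).mpr hFint
    -- assemble
    have : ∫ z, Φ z ∂μ = ∫ z, F z ∂μ := by
      rw [stepA]
      calc ∫ z, Φ (z ^ N) ∂μ
          = ∫ z, (N : ℂ)⁻¹ * ∑ k ∈ Finset.range N, F (ζ ^ k * z) ∂μ := by
            exact integral_congr_ae (Filter.Eventually.of_forall stepB)
        _ = (N : ℂ)⁻¹ * ∫ z, ∑ k ∈ Finset.range N, F (ζ ^ k * z) ∂μ := integral_const_mul _ _
        _ = (N : ℂ)⁻¹ * ∑ k ∈ Finset.range N, ∫ z, F (ζ ^ k * z) ∂μ := by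
            rw [integral_finset_sum _ fun k _ => hFrot_int k]
        _ = (N : ℂ)⁻¹ * ∑ k ∈ Finset.range N, ∫ z, F z ∂μ := by
            rw [Finset.sum_congr rfl fun k _ => stepC k]
        _ = ∫ z, F z ∂μ := by
            rw [Finset.sum_const, Finset.card_range, nsmul_eq_mul, ← mul_assoc,
              inv_mul_cancel₀ (by exact_mod_cast hN0 : (N : ℂ) ≠ 0), one_mul]
    -- rewrite both sides
    have lhs_eq : ∫ z, conj ((S₁ h : Circle → ℂ) z) * (S₂ f : Circle → ℂ) z ∂μ
        = ∫ z, F z ∂μ := by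
      refine integral_congr_ae ?_
      filter_upwards [hS₁ h, hS₂ f] with z h1 h2
      rw [h1, h2]
    have rhs_eq : ∫ z, conj ((h : Circle → ℂ) z) * (w : Circle → ℂ) z ∂μ
        = ∫ z, Φ z ∂μ := by
      refine integral_congr_ae ?_
      filter_upwards [hgf.coeFn_toLp] with z hz
      rw [hwdef, hz]
      rfl
    rw [lhs_eq, rhs_eq, this]
  rw [main]
  filter_upwards [hgf.coeFn_toLp] with z hz
  rw [hwdef, hz]
  rfl
end

section
/- Let m_0, ..., m_{N-1} ∈ L^∞(T) and define A_{k,l}(z) = (1/N) Σ_{w^N = z} w^{-l} m_k(w). Then the matrix (1/√N)(m_k(e^{2πil/N} z))_{k,l} is unitary for a.a. z if and only if the matrix A(z) = (A_{k,l}(z)) is unitary for a.a. z ∈ T. In fact, Σ_{k=0}^{N-1} A_{i,k}(z) conj(A_{j,k}(z)) = (1/N) Σ_{w^N = z} m_i(w) conj(m_j(w)) for a.a. z. -/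
open MeasureTheory ComplexConjugate

namespace LoopMatrixAux

open Complex Real Set

noncomputable def zeta (N : ℕ) : Circle := Circle.exp (2 * π / N)

noncomputable def psi (N : ℕ) (z : Circle) : Circle := Circle.exp (Complex.arg (z : ℂ) / N)

lemma exp_pow (x : ℝ) (n : ℕ) : Circle.exp x ^ n = Circle.exp (n * x) := by
  induction n with
  | zero => simp
  | succ n ih =>
      rw [pow_succ, ih, ← Circle.exp_add]
      push_cast
      ring_nf

variable {N : ℕ}

lemma psi_pow (hN : 0 < N) (z : Circle) : psi N z ^ N = z := by
  rw [psi, exp_pow]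
  rw [mul_div_cancel₀ _ (by exact_mod_cast hN.ne' : (N : ℝ) ≠ 0)]
  exact Circle.exp_arg z

lemma zeta_pow_inj (hN : 0 < N) {a b : ℕ} (ha : a < N) (hb : b < N)
    (h : zeta N ^ a = zeta N ^ b) : a = b := by
  rw [zeta, exp_pow, exp_pow, Circle.exp_eq_exp] at h
  obtain ⟨m, hm⟩ := h
  have hNR : (N : ℝ) ≠ 0 := by exact_mod_cast hN.ne'
  have hπ : (π : ℝ) ≠ 0 := Real.pi_ne_zero
  have key : (a : ℝ) = b + m * N := by
    field_simp at hm
    nlinarith [Real.pi_pos]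
  have : (a : ℤ) = b + m * N := by exact_mod_cast key
  have h1 : (a : ℤ) < N := by exact_mod_cast ha
  have h2 : (b : ℤ) < N := by exact_mod_cast hb
  have h3 : (0 : ℤ) ≤ (a : ℤ) := Int.natCast_nonneg a
  have h4 : (0 : ℤ) ≤ (b : ℤ) := Int.natCast_nonneg b
  have hm0 : m = 0 := by
    by_contra hmne
    rcases lt_or_gt_of_ne hmne with hlt | hgt
    · have hle : m * (N : ℤ) ≤ -1 * N := by
        apply mul_le_mul_of_nonneg_right (by omega) (by omega)
      linarith
    · have hge : 1 * (N : ℤ) ≤ m * N := by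
        apply mul_le_mul_of_nonneg_right (by omega) (by omega)
      linarith
  rw [hm0, zero_mul, add_zero] at this
  omega

lemma zeta_pow_N (hN : 0 < N) : zeta N ^ N = 1 := by
  rw [zeta, exp_pow, mul_div_cancel₀ _ (by exact_mod_cast hN.ne' : (N : ℝ) ≠ 0)]
  exact Circle.exp_two_pi

lemma roots_eq (hN : 0 < N) {z z0 : Circle} (h : z0 ^ N = z) :
    {w : Circle | w ^ N = z} = Set.range (fun j : Fin N => z0 * zeta N ^ (j : ℕ)) := by
  ext w
  simp only [Set.mem_setOf_eq, Set.mem_range]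
  constructor
  · intro hw
    -- w * z0⁻¹ is an N-th root of unity
    have hu : (w * z0⁻¹) ^ N = 1 := by
      rw [mul_pow, hw, inv_pow, h, mul_inv_cancel]
    set u := w * z0⁻¹ with hu_def
    have harg : Circle.exp (Complex.arg (u : ℂ)) = u := Circle.exp_arg u
    have h1 : Circle.exp ((N : ℝ) * Complex.arg (u : ℂ)) = 1 := by
      rw [← exp_pow, harg, hu]
    rw [Circle.exp_eq_one] at h1
    obtain ⟨n, hn⟩ := h1
    have hNR : (N : ℝ) ≠ 0 := by exact_mod_cast hN.ne'
    have harg2 : Complex.arg (u : ℂ) = n * (2 * π / N) := by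
      field_simp at hn ⊢
      linarith
    -- u = zeta N ^ ((n % N).toNat)
    have hn' : n = N * (n / N) + n % N := (Int.mul_ediv_add_emod n N).symm
    have hmod_nonneg : 0 ≤ n % N := Int.emod_nonneg n (by exact_mod_cast hN.ne')
    have hmod_lt : n % N < N := Int.emod_lt_of_pos n (by exact_mod_cast hN)
    refine ⟨⟨(n % N).toNat, by omega⟩, ?_⟩
    have hu_eq : u = zeta N ^ ((n % N).toNat) := by
      have hnr : (n : ℝ) = (N : ℝ) * ((n / (N : ℤ) : ℤ) : ℝ) + (((n % (N : ℤ)).toNat : ℕ) : ℝ) := by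
        have h1 : ((n % (N : ℤ)).toNat : ℤ) = n % N := Int.toNat_of_nonneg hmod_nonneg
        have h2 := Int.mul_ediv_add_emod n (N : ℤ)
        have h3 : n = (N : ℤ) * (n / (N : ℤ)) + ((n % (N : ℤ)).toNat : ℤ) := by
          rw [h1]; linarith
        exact_mod_cast h3
      have hsplit : (n : ℝ) * (2 * π / N)
          = (((n % (N : ℤ)).toNat : ℕ) : ℝ) * (2 * π / N) + ((n / (N : ℤ) : ℤ) : ℝ) * (2 * π) := by
        rw [hnr]; field_simp; ring
      rw [← harg, harg2, hsplit, Circle.exp_add, Circle.exp_int_mul_two_pi, mul_one,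
        zeta, exp_pow]
    have hw : z0 * u = w := by
      rw [hu_def, mul_comm w, ← mul_assoc, mul_inv_cancel, one_mul]
    rw [← hw, hu_eq]
  · rintro ⟨j, rfl⟩
    rw [mul_pow, h, ← pow_mul, mul_comm (j : ℕ) N, pow_mul, zeta_pow_N hN, one_pow, mul_one]

lemma roots_inj (hN : 0 < N) (z0 : Circle) :
    Function.Injective (fun j : Fin N => z0 * zeta N ^ (j : ℕ)) := by
  intro a b hab
  simp only [mul_right_inj] at hab
  exact Fin.ext (zeta_pow_inj hN a.isLt b.isLt hab)

lemma finsum_roots (hN : 0 < N) {z z0 : Circle} (h : z0 ^ N = z) (f : Circle → ℂ) :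
    ∑ᶠ w ∈ {w : Circle | w ^ N = z}, f w = ∑ j : Fin N, f (z0 * zeta N ^ (j : ℕ)) := by
  rw [roots_eq hN h, finsum_mem_range (roots_inj hN z0), finsum_eq_sum_of_fintype]

end LoopMatrixAux

open LoopMatrixAux Complex Real in
/-- With $A_{k,l}(z)=\frac1N\sum_{w^N=z}w^{-l}m_k(w)$, the matrix
$\frac1{\sqrt N}(m_k(e^{2\pi il/N}z))$ is unitary a.e. iff $A(z)$ is unitary a.e.;
moreover $\sum_k A_{i,k}(z)\overline{A_{j,k}(z)}=\frac1N\sum_{w^N=z}m_i(w)\overline{m_j(w)}$. -/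
theorem loop_matrix_unitary_iff (N : ℕ) (hN : 2 ≤ N) (μ : Measure Circle) [μ.IsHaarMeasure]
    [IsProbabilityMeasure μ] (m : Fin N → Circle → ℂ) (hm : ∀ i, MemLp (m i) ⊤ μ)
    (A : Fin N → Fin N → Circle → ℂ)
    (hA : ∀ k l z, A k l z
      = (N : ℂ)⁻¹ * ∑ᶠ w ∈ {w : Circle | w ^ N = z}, (w : ℂ) ^ (-(l : ℤ)) * m k w) :
    ((∀ᵐ z ∂μ, (Matrix.of fun k l : Fin N =>
          ((Real.sqrt N : ℂ))⁻¹ * m k (Circle.exp (2 * Real.pi * l / N) * z))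
        ∈ Matrix.unitaryGroup (Fin N) ℂ) ↔
      (∀ᵐ z ∂μ, (Matrix.of fun k l : Fin N => A k l z) ∈ Matrix.unitaryGroup (Fin N) ℂ)) ∧
    ∀ (i j : Fin N) (z : Circle), ∑ k, A i k z * conj (A j k z)
      = (N : ℂ)⁻¹ * ∑ᶠ w ∈ {w : Circle | w ^ N = z}, m i w * conj (m j w) := by
  have hN0 : 0 < N := by omega
  have hNC : (N : ℂ) ≠ 0 := by exact_mod_cast hN0.ne'
  set ζ : Circle := zeta N with hζ
  -- the key dot-product computation
  have dot : ∀ (i j : Fin N) (z z0 : Circle), z0 ^ N = z →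
      ∑ k, A i k z * conj (A j k z)
        = (N : ℂ)⁻¹ * ∑ a : Fin N, m i (z0 * ζ ^ (a : ℕ)) * conj (m j (z0 * ζ ^ (a : ℕ))) := by
    intro i j z z0 h
    set e : Fin N → Circle := fun a => z0 * ζ ^ (a : ℕ) with he
    set u : Fin N → Fin N → ℂ := fun a b => (e b : ℂ) * (e a : ℂ)⁻¹ with hu
    have hAe : ∀ (k l : Fin N), A k l z
        = (N : ℂ)⁻¹ * ∑ a : Fin N, ((e a : ℂ)) ^ (-(l : ℤ)) * m k (e a) := by
      intro k l
      rw [hA k l z, finsum_roots hN0 h]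
    have hgeom : ∀ a b : Fin N, (∑ k : Fin N, u a b ^ (k : ℕ))
        = if a = b then (N : ℂ) else 0 := by
      intro a b
      by_cases hab : a = b
      · subst hab
        simp [hu, mul_inv_cancel₀ (Circle.coe_ne_zero (e a))]
      · rw [if_neg hab]
        have huN : u a b ^ N = 1 := by
          have hb : ((e b : ℂ)) ^ N = (z : ℂ) := by
            have : (e b) ^ N = z := by
              rw [he]
              simp only
              rw [mul_pow, h, ← pow_mul, mul_comm (b : ℕ) N, pow_mul, zeta_pow_N hN0,
                one_pow, mul_one]
            rw [← this]; push_cast [map_pow]; rfl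
          have ha : ((e a : ℂ)) ^ N = (z : ℂ) := by
            have : (e a) ^ N = z := by
              rw [he]
              simp only
              rw [mul_pow, h, ← pow_mul, mul_comm (a : ℕ) N, pow_mul, zeta_pow_N hN0,
                one_pow, mul_one]
            rw [← this]; push_cast [map_pow]; rfl
          rw [hu]
          simp only
          rw [mul_pow, inv_pow, ha, hb]
          exact mul_inv_cancel₀ (Circle.coe_ne_zero z)
        have hune : u a b ≠ 1 := by
          intro hcon
          apply hab
          have : (e b : ℂ) = (e a : ℂ) := by
            simp only [hu] at hcon
            exact (mul_inv_eq_one₀ (Circle.coe_ne_zero _)).mp hcon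
          have heq : e b = e a := Subtype.ext this
          exact (roots_inj hN0 z0 heq).symm
        rw [Fin.sum_univ_eq_sum_range (fun k => u a b ^ k) N, geom_sum_eq hune, huN]
        simp
    calc ∑ k, A i k z * conj (A j k z)
        = ∑ k : Fin N, ∑ a : Fin N, ∑ b : Fin N, ((N : ℂ)⁻¹ * (N : ℂ)⁻¹) *
            ((m i (e a) * conj (m j (e b))) * u a b ^ (k : ℕ)) := by
          refine Finset.sum_congr rfl fun k _ => ?_
          rw [hAe i k, hAe j k, map_mul, map_inv₀, map_natCast, map_sum, Finset.mul_sum,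
            Finset.mul_sum, Finset.sum_mul_sum]
          refine Finset.sum_congr rfl fun a _ => Finset.sum_congr rfl fun b _ => ?_
          rw [map_mul, map_zpow₀, ← Circle.coe_inv_eq_conj, Circle.coe_inv]
          have hterm : ((e a : ℂ)) ^ (-(k : ℤ)) * (((e b : ℂ))⁻¹) ^ (-(k : ℤ))
              = u a b ^ (k : ℕ) := by
            have h1 : ((e a : ℂ)) ^ (-(k : ℤ)) = (((e a : ℂ))⁻¹) ^ (k : ℕ) := by
              rw [inv_pow, ← zpow_natCast, ← zpow_neg]
            have h2 : (((e b : ℂ))⁻¹) ^ (-(k : ℤ)) = ((e b : ℂ)) ^ (k : ℕ) := by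
              rw [inv_zpow', neg_neg, zpow_natCast]
            rw [h1, h2, hu]
            simp only
            rw [mul_comm ((e b : ℂ)) (((e a : ℂ))⁻¹), mul_pow]
          rw [← hterm]
          ring
      _ = ∑ a : Fin N, ∑ b : Fin N, ((N : ℂ)⁻¹ * (N : ℂ)⁻¹) *
            ((m i (e a) * conj (m j (e b))) * ∑ k : Fin N, u a b ^ (k : ℕ)) := by
          rw [Finset.sum_comm]
          refine Finset.sum_congr rfl fun a _ => ?_
          rw [Finset.sum_comm]
          refine Finset.sum_congr rfl fun b _ => ?_
          rw [← Finset.mul_sum, ← Finset.mul_sum]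
      _ = (N : ℂ)⁻¹ * ∑ a : Fin N, m i (e a) * conj (m j (e a)) := by
          rw [Finset.mul_sum]
          refine Finset.sum_congr rfl fun a _ => ?_
          rw [Finset.sum_eq_single a]
          · rw [hgeom a a, if_pos rfl]
            field_simp
          · intro b _ hb
            rw [hgeom a b, if_neg (Ne.symm hb)]
            ring
          · intro ha; exact absurd (Finset.mem_univ a) ha
  -- part 2
  have part2 : ∀ (i j : Fin N) (z : Circle), ∑ k, A i k z * conj (A j k z)
      = (N : ℂ)⁻¹ * ∑ᶠ w ∈ {w : Circle | w ^ N = z}, m i w * conj (m j w) := by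
    intro i j z
    rw [dot i j z (psi N z) (psi_pow hN0 z),
      finsum_roots hN0 (psi_pow hN0 z) (fun w => m i w * conj (m j w))]
  refine ⟨?_, part2⟩
  -- part 1
  -- unitarity criterion
  have mem_iff : ∀ M : Matrix (Fin N) (Fin N) ℂ, M ∈ Matrix.unitaryGroup (Fin N) ℂ ↔
      ∀ i j, ∑ l, M i l * conj (M j l) = if i = j then 1 else 0 := by
    intro M
    rw [Matrix.mem_unitaryGroup_iff, ← Matrix.ext_iff]
    constructor
    · intro h i j
      have := h i j
      simpa [Matrix.mul_apply, Matrix.star_apply, Matrix.one_apply, Complex.star_def] using this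
    · intro h i j
      have := h i j
      simpa [Matrix.mul_apply, Matrix.star_apply, Matrix.one_apply, Complex.star_def] using this
  -- pointwise: B(z) unitary ↔ A(z^N) unitary
  have hBA : ∀ z : Circle,
      ((Matrix.of fun k l : Fin N =>
          ((Real.sqrt N : ℂ))⁻¹ * m k (Circle.exp (2 * Real.pi * l / N) * z))
        ∈ Matrix.unitaryGroup (Fin N) ℂ) ↔
      ((Matrix.of fun k l : Fin N => A k l (z ^ N)) ∈ Matrix.unitaryGroup (Fin N) ℂ) := by
    intro z
    rw [mem_iff, mem_iff]
    simp only [Matrix.of_apply]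
    have hBrow : ∀ i j : Fin N,
        ∑ l : Fin N, ((Real.sqrt N : ℂ))⁻¹ * m i (Circle.exp (2 * Real.pi * l / N) * z) *
          conj (((Real.sqrt N : ℂ))⁻¹ * m j (Circle.exp (2 * Real.pi * l / N) * z))
        = ∑ k, A i k (z ^ N) * conj (A j k (z ^ N)) := by
      intro i j
      rw [dot i j (z ^ N) z rfl]
      have hsqrt : ((Real.sqrt N : ℂ))⁻¹ * conj ((Real.sqrt N : ℂ))⁻¹ = (N : ℂ)⁻¹ := by
        rw [map_inv₀, Complex.conj_ofReal, ← mul_inv]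
        congr 1
        rw [← Complex.ofReal_mul, Real.mul_self_sqrt (Nat.cast_nonneg N)]
        norm_cast
      rw [Finset.mul_sum]
      refine Finset.sum_congr rfl fun l _ => ?_
      have hexp : Circle.exp (2 * Real.pi * (l : ℕ) / N) = ζ ^ (l : ℕ) := by
        rw [hζ, zeta, exp_pow]
        congr 1
        ring
      rw [map_mul, hexp, mul_comm (ζ ^ (l : ℕ)) z]
      calc ((Real.sqrt N : ℂ))⁻¹ * m i (z * ζ ^ (l : ℕ)) *
            (conj ((Real.sqrt N : ℂ))⁻¹ * conj (m j (z * ζ ^ (l : ℕ))))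
          = (((Real.sqrt N : ℂ))⁻¹ * conj ((Real.sqrt N : ℂ))⁻¹) *
            (m i (z * ζ ^ (l : ℕ)) * conj (m j (z * ζ ^ (l : ℕ)))) := by ring
        _ = (N : ℂ)⁻¹ * (m i (z * ζ ^ (l : ℕ)) * conj (m j (z * ζ ^ (l : ℕ)))) := by
            rw [hsqrt]
    constructor
    · intro h i j; rw [← hBrow i j]; exact h i j
    · intro h i j; rw [hBrow i j]; exact h i j
  -- measure-theoretic transfer
  have hφ : MeasurePreserving (fun z : Circle => z ^ N) μ μ := by
    have hsurj : Function.Surjective (powMonoidHom N : Circle →* Circle) := by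
      intro z
      exact ⟨psi N z, psi_pow hN0 z⟩
    exact MonoidHom.measurePreserving (f := (powMonoidHom N : Circle →* Circle))
      (continuous_pow N) hsurj rfl
  have hψmeas : Measurable (fun z : Circle => psi N z) := by
    have hcoe : Continuous (fun z : Circle => (z : ℂ)) := continuous_subtype_val
    have hcoe' : Measurable (fun z : Circle => (z : ℂ)) := hcoe.measurable
    have h1 : Measurable (fun z : Circle => Complex.arg (z : ℂ) / N) :=
      (Complex.measurable_arg.comp hcoe').div_const _
    exact (map_continuous Circle.exp).measurable.comp h1
  have ae_pow_iff : ∀ P : Circle → Prop,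
      ((∀ᵐ z ∂μ, P (z ^ N)) ↔ (∀ᵐ z ∂μ, P z)) := by
    intro P
    constructor
    · intro h
      rw [ae_iff] at h ⊢
      obtain ⟨t, hsub, htm, ht0⟩ := exists_measurable_superset_of_null h
      -- {z | ¬ P z} ⊆ ψ ⁻¹' t
      have hsub2 : {z | ¬ P z} ⊆ (fun z => psi N z) ⁻¹' t := by
        intro z hz
        apply hsub
        simp only [Set.mem_setOf_eq, Set.mem_preimage] at *
        rw [psi_pow hN0 z]
        exact hz
      refine measure_mono_null hsub2 ?_
      -- μ(ψ⁻¹ t) = μ(φ⁻¹ ψ⁻¹ t) ≤ Σ_j μ((ζ^j •)⁻¹ t) = 0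
      have hmeas_pre : MeasurableSet ((fun z => psi N z) ⁻¹' t) := hψmeas htm
      rw [← hφ.measure_preimage hmeas_pre.nullMeasurableSet]
      have hcover : (fun z : Circle => z ^ N) ⁻¹' ((fun z => psi N z) ⁻¹' t)
          ⊆ ⋃ j : Fin N, (fun w : Circle => w * ζ ^ (j : ℕ)) ⁻¹' t := by
        intro w hw
        simp only [Set.mem_preimage] at hw
        have : psi N (w ^ N) ∈ {v : Circle | v ^ N = w ^ N} := psi_pow hN0 (w ^ N)
        rw [roots_eq hN0 (rfl : w ^ N = w ^ N)] at this
        obtain ⟨j, hj⟩ := this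
        have hj' : w * zeta N ^ (j : ℕ) = psi N (w ^ N) := hj
        refine Set.mem_iUnion.2 ⟨j, ?_⟩
        show w * ζ ^ (j : ℕ) ∈ t
        rw [hζ, hj']
        exact hw
      refine measure_mono_null hcover ?_
      refine measure_iUnion_null fun j => ?_
      have : (fun w : Circle => w * ζ ^ (j : ℕ)) ⁻¹' t
          = (fun w : Circle => ζ ^ (j : ℕ) * w) ⁻¹' t := by
        ext w; simp [mul_comm]
      rw [this, measure_preimage_mul]
      exact ht0
    · intro h
      rw [ae_iff] at h ⊢
      obtain ⟨t, hsub, htm, ht0⟩ := exists_measurable_superset_of_null h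
      have hsub2 : {z | ¬ P (z ^ N)} ⊆ (fun z : Circle => z ^ N) ⁻¹' t := fun z hz => hsub hz
      refine measure_mono_null hsub2 ?_
      rw [hφ.measure_preimage htm.nullMeasurableSet]
      exact ht0
  constructor
  · intro h
    rw [← ae_pow_iff (fun z => (Matrix.of fun k l : Fin N => A k l z)
      ∈ Matrix.unitaryGroup (Fin N) ℂ)]
    filter_upwards [h] with z hz
    exact (hBA z).1 hz
  · intro h
    have h' := (ae_pow_iff (fun z => (Matrix.of fun k l : Fin N => A k l z)
      ∈ Matrix.unitaryGroup (Fin N) ℂ)).2 h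
    filter_upwards [h'] with z hz
    exact (hBA z).2 hz
end

section
/- Let S_i f(z) = m_i(z) f(z^N) with m_i(z) = Σ_{j=0}^{N-1} A_{i,j}(z^N) z^j for matrix functions A_{i,j} ∈ L^∞(T). Then for all f ∈ L^2(T), S_i* S_j f(z) = (A A*)_{j,i}(z) f(z), i.e., S_i* S_j is multiplication by the (j,i) entry of the pointwise product A(z) A(z)*. -/
open MeasureTheory ComplexConjugate

lemma circle_exp_pow (x : ℝ) : ∀ n : ℕ, Circle.exp x ^ n = Circle.exp (n * x)
  | 0 => by simp [Circle.exp_zero]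
  | n + 1 => by
    rw [pow_succ, circle_exp_pow x n, ← Circle.exp_add]
    push_cast
    ring_nf

lemma circle_pow_surj {N : ℕ} (hN : N ≠ 0) : Function.Surjective fun z : Circle => z ^ N := by
  intro w
  refine ⟨Circle.exp (Complex.arg w / N), ?_⟩
  have hN' : (N : ℝ) ≠ 0 := Nat.cast_ne_zero.mpr hN
  show Circle.exp (Complex.arg w / N) ^ N = w
  rw [circle_exp_pow, mul_div_cancel₀ _ hN', Circle.exp_arg]

lemma _root_.map_pow_haar {N : ℕ} (hN : N ≠ 0) (μ : Measure Circle) [μ.IsHaarMeasure]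
    [IsProbabilityMeasure μ] : μ.map (fun z : Circle => z ^ N) = μ := by
  have hc : Continuous fun z : Circle => z ^ N := continuous_pow N
  have h1 : (μ.map (powMonoidHom N : Circle →* Circle)).IsHaarMeasure :=
    Measure.isHaarMeasure_map_of_isFiniteMeasure μ (powMonoidHom N) hc (circle_pow_surj hN)
  have h1' : (μ.map fun z : Circle => z ^ N).IsHaarMeasure := h1
  have h2 : IsProbabilityMeasure (μ.map fun z : Circle => z ^ N) :=
    Measure.isProbabilityMeasure_map hc.measurable.aemeasurable
  exact Measure.isHaarMeasure_eq_of_isProbabilityMeasure _ μ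

lemma integral_zero_of_invariant (μ : Measure Circle) [μ.IsHaarMeasure]
    (g : Circle → ℂ) (ω : Circle) (c : ℂ) (hc : c ≠ 1)
    (h : ∀ z, g (ω * z) = c * g z) : ∫ z, g z ∂μ = 0 := by
  have h1 : ∫ z, g (ω * z) ∂μ = ∫ z, g z ∂μ := integral_mul_left_eq_self g ω
  have h2 : ∫ z, g (ω * z) ∂μ = c * ∫ z, g z ∂μ := by
    simp_rw [h]; exact integral_const_mul c g
  have h3 : (c - 1) * ∫ z, g z ∂μ = 0 := by
    rw [sub_mul, one_mul, ← h2, h1, sub_self]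
  rcases mul_eq_zero.mp h3 with h4 | h4
  · exact absurd (sub_eq_zero.mp h4) hc
  · exact h4

lemma omega_exp_ne_one {N : ℕ} (hN : 2 ≤ N) {d : ℤ} (hd0 : d ≠ 0) (hd : d.natAbs < N) :
    Complex.exp (d * (2 * Real.pi / N) * Complex.I) ≠ 1 := by
  intro h
  rw [Complex.exp_eq_one_iff] at h
  obtain ⟨n, hn⟩ := h
  have hN' : (N : ℂ) ≠ 0 := Nat.cast_ne_zero.mpr (by omega)
  have hpi : (Real.pi : ℂ) ≠ 0 := by exact_mod_cast Real.pi_ne_zero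
  have hI : (Complex.I : ℂ) ≠ 0 := Complex.I_ne_zero
  have hc : (d : ℂ) = n * N := by
    field_simp at hn
    have h3 : (d:ℂ) * (2*Real.pi) * Complex.I = ((n:ℂ)*N) * (2*Real.pi) * Complex.I := by
      linear_combination (2*(Real.pi:ℂ)*Complex.I) * hn
    have h4 := mul_right_cancel₀ hI h3
    exact mul_right_cancel₀ (by simp [hpi] : (2*(Real.pi:ℂ)) ≠ 0) h4
  have hdn : d = n * N := by exact_mod_cast hc
  have hn0 : n ≠ 0 := by rintro rfl; simp at hdn; omega
  have : N ≤ d.natAbs := by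
    rw [hdn, Int.natAbs_mul, Int.natAbs_natCast]
    exact Nat.le_mul_of_pos_left N (Int.natAbs_pos.mpr hn0)
  omega

lemma circle_coe_exp_pow (x : ℝ) (n : ℕ) :
    ((Circle.exp x : Circle) : ℂ) ^ n = Complex.exp ((n * x : ℝ) * Complex.I) := by
  rw [← Circle.coe_exp, ← circle_exp_pow]
  push_cast
  rfl

lemma omega_factor_eq {x : ℝ} (k l : ℕ) :
    conj (((Circle.exp x : Circle) : ℂ) ^ k) * ((Circle.exp x : Circle) : ℂ) ^ l
      = Complex.exp ((((l : ℤ) - (k : ℤ)) * x) * Complex.I) := by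
  rw [Circle.coe_exp, ← Complex.exp_nat_mul, ← Complex.exp_nat_mul, ← Complex.exp_conj,
    ← Complex.exp_add]
  congr 1
  rw [_root_.map_mul, _root_.map_mul, Complex.conj_I, Complex.conj_ofReal, map_natCast]
  push_cast
  ring

lemma omega_factor_ne_one {N : ℕ} (hN : 2 ≤ N) (k l : Fin N) (hkl : k ≠ l) :
    conj (((Circle.exp (2 * Real.pi / N) : Circle) : ℂ) ^ (k : ℕ)) *
      ((Circle.exp (2 * Real.pi / N) : Circle) : ℂ) ^ (l : ℕ) ≠ 1 := by
  rw [omega_factor_eq]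
  intro h
  have hd0 : ((l : ℤ) - (k : ℤ)) ≠ 0 := by
    have : (k : ℕ) ≠ (l : ℕ) := fun h => hkl (Fin.ext h)
    omega
  have hdlt : ((l : ℤ) - (k : ℤ)).natAbs < N := by
    have hk := k.isLt; have hl := l.isLt; omega
  apply omega_exp_ne_one hN hd0 hdlt
  rw [← h]
  congr 1
  push_cast
  ring

lemma memℒp_conj {α : Type*} [MeasurableSpace α] {μ : Measure α} {p : ENNReal} {f : α → ℂ}
    (hf : MemLp f p μ) : MemLp (fun z => conj (f z)) p μ := by
  refine ⟨RCLike.continuous_conj.comp_aestronglyMeasurable hf.1, ?_⟩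
  have h : eLpNorm (fun z => conj (f z)) p μ = eLpNorm f p μ :=
    eLpNorm_congr_norm_ae (Filter.Eventually.of_forall fun x => by simp)
  rw [h]; exact hf.2

open Matrix in
/-- If $m_i(z)=\sum_j A_{i,j}(z^N)z^j$ then $S_i^*S_j$ is multiplication by the
$(j,i)$ entry of $A(z)A(z)^*$. -/
theorem adjoint_comp_eq_loop_entry (N : ℕ) (hN : 2 ≤ N) (μ : Measure Circle)
    [μ.IsHaarMeasure] [IsProbabilityMeasure μ]
    (A : Circle → Matrix (Fin N) (Fin N) ℂ)
    (hA : ∀ i j, MemLp (fun z => A z i j) ⊤ μ)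
    (m : Fin N → Circle → ℂ)
    (hm : ∀ (i : Fin N) (z : Circle), m i z = ∑ j : Fin N, A (z ^ N) i j * (z : ℂ) ^ (j : ℕ))
    (S : Fin N → (Lp ℂ 2 μ →L[ℂ] Lp ℂ 2 μ))
    (hS : ∀ i (f : Lp ℂ 2 μ), (S i f : Circle → ℂ) =ᵐ[μ] fun z => m i z * f (z ^ N)) :
    ∀ (i j : Fin N) (f : Lp ℂ 2 μ),
      (ContinuousLinearMap.adjoint (S i) (S j f) : Circle → ℂ)
        =ᵐ[μ] fun z => (A z * (A z)ᴴ) j i * f z := by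
  intro i j f
  have hN0 : N ≠ 0 := by omega
  set p : Circle → Circle := fun z => z ^ N with hp_def
  have hpm : Measurable p := (continuous_pow N).measurable
  have hmap : μ.map p = μ := _root_.map_pow_haar hN0 μ
  -- ae strongly measurable helpers
  have hconjasm : ∀ {g : Circle → ℂ}, AEStronglyMeasurable g μ →
      AEStronglyMeasurable (fun z => conj (g z)) μ := fun hg =>
    RCLike.continuous_conj.comp_aestronglyMeasurable hg
  have hcomp : ∀ {g : Circle → ℂ}, AEStronglyMeasurable g μ →
      AEStronglyMeasurable (fun z => g (p z)) μ := by
    intro g hg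
    have h1 : AEStronglyMeasurable g (μ.map p) := by rwa [hmap]
    exact h1.comp_aemeasurable hpm.aemeasurable
  have hcoe : Continuous ((↑) : Circle → ℂ) := continuous_induced_dom
  have hzpow : ∀ (n : ℕ), AEStronglyMeasurable (fun z : Circle => ((z : ℂ)) ^ n) μ := by
    intro n
    apply Continuous.aestronglyMeasurable
    exact hcoe.pow n
  have hnorm1 : ∀ (z : Circle) (n : ℕ), ‖((z : ℂ)) ^ n‖ = 1 := by
    intro z n
    rw [norm_pow]
    rw [Circle.norm_coe, one_pow]
  -- bounds on entries of A
  have hbd : ∀ a b, ∃ C : ℝ, ∀ᵐ w ∂μ, ‖A w a b‖ ≤ C := by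
    intro a b
    refine ⟨(eLpNormEssSup (fun w => A w a b) μ).toReal, ?_⟩
    have hlt : eLpNormEssSup (fun w => A w a b) μ < ⊤ := by
      have := (hA a b).2
      rwa [eLpNorm_exponent_top] at this
    filter_upwards [ae_le_eLpNormEssSup (f := fun w => A w a b) (μ := μ)] with w hw
    have : ((‖A w a b‖₊ : ENNReal)).toReal ≤ (eLpNormEssSup (fun w => A w a b) μ).toReal :=
      ENNReal.toReal_mono hlt.ne hw
    simpa using this
  have hbdp : ∀ a b, ∃ C : ℝ, ∀ᵐ z ∂μ, ‖A (p z) a b‖ ≤ C := by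
    intro a b
    obtain ⟨C, hC⟩ := hbd a b
    refine ⟨C, ?_⟩
    have h1 : ∀ᵐ w ∂(μ.map p), ‖A w a b‖ ≤ C := by rwa [hmap]
    exact ae_of_ae_map hpm.aemeasurable h1
  -- base integrable functions
  have hbase : ∀ u v : Lp ℂ 2 μ,
      Integrable (fun w => conj ((u : Circle → ℂ) w) * (v : Circle → ℂ) w) μ := by
    intro u v
    have h1 := L2.integrable_inner (𝕜 := ℂ) u v
    simpa [RCLike.inner_apply, mul_comm] using h1
  -- the multiplier is essentially bounded
  have hMmem : MemLp (fun z => (A z * (A z)ᴴ) j i) ⊤ μ := by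
    have he : (fun z => (A z * (A z)ᴴ) j i)
        = fun z => ∑ k : Fin N, A z j k * conj (A z i k) := by
      funext z
      simp [Matrix.mul_apply, Matrix.conjTranspose_apply, RCLike.star_def]
    rw [he]
    refine memLp_finset_sum Finset.univ fun k _ => ?_
    exact MemLp.mul' (memℒp_conj (hA i k)) (hA j k)
  have hMf : MemLp (fun z => (A z * (A z)ᴴ) j i * (f : Circle → ℂ) z) 2 μ :=
    MemLp.mul' (Lp.memLp f) hMmem
  set g0 : Lp ℂ 2 μ := hMf.toLp _ with hg0def
  have hg0 : (g0 : Circle → ℂ)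
      =ᵐ[μ] fun z => (A z * (A z)ᴴ) j i * (f : Circle → ℂ) z := hMf.coeFn_toLp
  suffices hkey : ContinuousLinearMap.adjoint (S i) (S j f) = g0 by
    rw [hkey]; exact hg0
  refine ext_inner_right ℂ fun h => ?_
  rw [ContinuousLinearMap.adjoint_inner_left]
  -- special constants
  set ω : Circle := Circle.exp (2 * Real.pi / N) with hω
  have hωN : ω ^ N = 1 := by
    rw [hω, circle_exp_pow]
    have hc : (N : ℝ) * (2 * Real.pi / N) = 2 * Real.pi := by
      field_simp
    rw [hc, Circle.exp_two_pi]
  -- the summand functions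
  set T : Fin N → Fin N → Circle → ℂ := fun k l z =>
    conj (A (p z) j k * (z : ℂ) ^ (k : ℕ) * (f : Circle → ℂ) (p z))
      * (A (p z) i l * (z : ℂ) ^ (l : ℕ) * (h : Circle → ℂ) (p z)) with hT
  set G : Fin N → Circle → ℂ := fun k w =>
    conj (A w j k * (f : Circle → ℂ) w) * (A w i k * (h : Circle → ℂ) w) with hG
  have hGasm : ∀ k, AEStronglyMeasurable (G k) μ := fun k =>
    (hconjasm (((hA j k).1).mul (Lp.aestronglyMeasurable f))).mul
      (((hA i k).1).mul (Lp.aestronglyMeasurable h))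
  have hGint : ∀ k, Integrable (G k) μ := by
    intro k
    obtain ⟨C1, hC1⟩ := hbd j k
    obtain ⟨C2, hC2⟩ := hbd i k
    have hBasm : AEStronglyMeasurable (fun w => conj (A w j k) * A w i k) μ :=
      (hconjasm (hA j k).1).mul (hA i k).1
    have hBint : Integrable (fun w => (conj (A w j k) * A w i k)
        * (conj ((f : Circle → ℂ) w) * (h : Circle → ℂ) w)) μ := by
      refine Integrable.bdd_mul (c := C1 * C2) (hbase f h) hBasm ?_
      filter_upwards [hC1, hC2] with w h1 h2
      rw [norm_mul, RCLike.norm_conj]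
      exact mul_le_mul h1 h2 (norm_nonneg _) ((norm_nonneg _).trans h1)
    refine hBint.congr (Filter.Eventually.of_forall fun w => ?_)
    simp only [hG, _root_.map_mul]
    ring
  have hTint : ∀ k l, Integrable (T k l) μ := by
    intro k l
    obtain ⟨C1, hC1⟩ := hbdp j k
    obtain ⟨C2, hC2⟩ := hbdp i l
    have hFp : Integrable (fun z => conj ((f : Circle → ℂ) (p z))
        * (h : Circle → ℂ) (p z)) μ := by
      have h1 : AEStronglyMeasurable (fun w => conj ((f : Circle → ℂ) w)
          * (h : Circle → ℂ) w) (μ.map p) := by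
        rw [hmap]
        exact (hconjasm (Lp.aestronglyMeasurable f)).mul (Lp.aestronglyMeasurable h)
      have h2 : Integrable (fun w => conj ((f : Circle → ℂ) w)
          * (h : Circle → ℂ) w) (μ.map p) := by
        rw [hmap]; exact hbase f h
      have h3 := (integrable_map_measure h1 hpm.aemeasurable).mp h2
      exact h3
    have hBasm : AEStronglyMeasurable
        (fun z => conj (A (p z) j k * (z : ℂ) ^ (k : ℕ))
          * (A (p z) i l * (z : ℂ) ^ (l : ℕ))) μ :=
      (hconjasm ((hcomp (hA j k).1).mul (hzpow k))).mul ((hcomp (hA i l).1).mul (hzpow l))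
    have hBint : Integrable (fun z =>
        (conj (A (p z) j k * (z : ℂ) ^ (k : ℕ)) * (A (p z) i l * (z : ℂ) ^ (l : ℕ)))
          * (conj ((f : Circle → ℂ) (p z)) * (h : Circle → ℂ) (p z))) μ := by
      refine Integrable.bdd_mul (c := C1 * C2) hFp hBasm ?_
      filter_upwards [hC1, hC2] with z h1 h2
      rw [norm_mul, RCLike.norm_conj, norm_mul, norm_mul, hnorm1, hnorm1, mul_one, mul_one]
      exact mul_le_mul h1 h2 (norm_nonneg _) ((norm_nonneg _).trans h1)
    refine hBint.congr (Filter.Eventually.of_forall fun z => ?_)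
    simp only [hT, _root_.map_mul]
    ring
  -- off-diagonal terms vanish
  have hvanish : ∀ k l : Fin N, k ≠ l → ∫ z, T k l z ∂μ = 0 := by
    intro k l hkl
    refine integral_zero_of_invariant μ (T k l) ω (conj ((ω : ℂ) ^ (k : ℕ)) * (ω : ℂ) ^ (l : ℕ))
      (omega_factor_ne_one hN k l hkl) ?_
    intro z
    have hpz : p (ω * z) = p z := by
      simp only [hp_def]
      rw [mul_pow, hωN, one_mul]
    simp only [hT, hpz]
    have hcoe2 : ((ω * z : Circle) : ℂ) = (ω : ℂ) * (z : ℂ) := rfl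
    rw [hcoe2]
    simp only [_root_.map_mul, _root_.map_pow, mul_pow]
    ring
  -- diagonal terms
  have hdiag : ∀ k : Fin N, ∫ z, T k k z ∂μ = ∫ w, G k w ∂μ := by
    intro k
    have hTG : ∀ z, T k k z = G k (p z) := by
      intro z
      have habs : ‖((z : ℂ))‖ = 1 := Circle.norm_coe z
      have h1 : conj ((z : ℂ)) * (z : ℂ) = 1 := by
        rw [mul_comm, Complex.mul_conj, Complex.normSq_eq_norm_sq, habs]
        norm_num
      calc T k k z = G k (p z) * ((conj ((z : ℂ)) * (z : ℂ)) ^ (k : ℕ)) := by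
            simp only [hT, hG, _root_.map_mul, _root_.map_pow, mul_pow]
            ring
        _ = G k (p z) := by rw [h1, one_pow, mul_one]
    have h2 : AEStronglyMeasurable (G k) (μ.map p) := by rw [hmap]; exact hGasm k
    calc ∫ z, T k k z ∂μ = ∫ z, G k (p z) ∂μ := by simp only [hTG]
      _ = ∫ w, G k w ∂(μ.map p) := (integral_map hpm.aemeasurable h2).symm
      _ = ∫ w, G k w ∂μ := by rw [hmap]
  -- compute the left inner product
  have hinner_left : (inner ℂ (S j f) (S i h) : ℂ) = ∑ k : Fin N, ∫ w, G k w ∂μ := by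
    rw [L2.inner_def]
    have hstep : ∫ z, (inner ℂ ((S j f : Circle → ℂ) z) ((S i h : Circle → ℂ) z) : ℂ) ∂μ
        = ∫ z, ∑ k : Fin N, ∑ l : Fin N, T k l z ∂μ := by
      refine integral_congr_ae ?_
      filter_upwards [hS j f, hS i h] with z h1 h2
      rw [RCLike.inner_apply, mul_comm ((S i h : Circle → ℂ) z), h1, h2, hm, hm]
      simp only [hT, hp_def, _root_.map_mul, _root_.map_sum, _root_.map_pow, Finset.sum_mul,
        Finset.mul_sum]
      rw [Finset.sum_comm]
    rw [hstep, integral_finset_sum _ (fun k _ => integrable_finset_sum _ (fun l _ => hTint k l))]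
    refine Finset.sum_congr rfl fun k _ => ?_
    rw [integral_finset_sum _ (fun l _ => hTint k l), Finset.sum_eq_single k]
    · exact hdiag k
    · intro l _ hlk
      exact hvanish k l (Ne.symm hlk)
    · intro hk
      exact absurd (Finset.mem_univ k) hk
  -- compute the right inner product
  have hinner_right : (inner ℂ g0 h : ℂ) = ∑ k : Fin N, ∫ w, G k w ∂μ := by
    rw [L2.inner_def]
    have hstep : ∫ z, (inner ℂ ((g0 : Circle → ℂ) z) ((h : Circle → ℂ) z) : ℂ) ∂μ
        = ∫ w, ∑ k : Fin N, G k w ∂μ := by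
      refine integral_congr_ae ?_
      filter_upwards [hg0] with w hw
      rw [RCLike.inner_apply, mul_comm ((h : Circle → ℂ) w), hw]
      simp only [hG, Matrix.mul_apply, Matrix.conjTranspose_apply, RCLike.star_def, _root_.map_mul,
        _root_.map_sum, Complex.conj_conj, Finset.sum_mul]
      refine Finset.sum_congr rfl fun k _ => ?_
      ring
    rw [hstep, integral_finset_sum _ (fun k _ => hGint k)]
  rw [hinner_left, hinner_right]
end

section
/- If R and S are commuting positive bounded operators on a Hilbert space, then 0 ≤ R S R ≤ ‖R‖² S. Moreover, if S is a projection, the inequality R S R ≤ ‖R‖² S holds if and only if R and S commute. -/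
/-- An element commuting with a selfadjoint element `a` of a C⋆-algebra commutes with every
continuous function of `a`. -/
lemma commute_cfc_aux {A : Type*} [CStarAlgebra A] {a b : A} (ha : IsSelfAdjoint a)
    (h : Commute b a) (f : ℝ → ℝ) : Commute b (cfc f a) := by
  by_cases hf : ContinuousOn f (spectrum ℝ a)
  · rw [cfc_apply f a ha hf]
    suffices H : ∀ g : C(spectrum ℝ a, ℝ), Commute b (cfcHom ha g) from H _
    intro g
    let φ : C(spectrum ℝ a, ℝ) →ₐ[ℝ] A := (cfcHom ha (R := ℝ)).toAlgHom
    have hφcont : Continuous φ := (cfcHom_isClosedEmbedding ha).continuous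
    let T : Subalgebra ℝ C(spectrum ℝ a, ℝ) :=
      (Subalgebra.centralizer ℝ {b}).comap φ
    have hTc : IsClosed (T : Set C(spectrum ℝ a, ℝ)) := by
      have : (T : Set C(spectrum ℝ a, ℝ)) = φ ⁻¹' {x : A | b * x = x * b} := by
        ext g
        simp [T, Subalgebra.mem_comap, Subalgebra.mem_centralizer_iff, Set.mem_centralizer_iff]
      rw [this]
      exact (isClosed_eq (continuous_const.mul continuous_id)
        (continuous_id.mul continuous_const)).preimage hφcont
    have hle : polynomialFunctions (spectrum ℝ a) ≤ T := by
      rw [polynomialFunctions.eq_adjoin_X]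
      refine Algebra.adjoin_le ?_
      rintro x ⟨rfl⟩
      show φ _ ∈ Subalgebra.centralizer ℝ {b}
      have hX : (Polynomial.toContinuousMapOnAlgHom (spectrum ℝ a)) Polynomial.X
          = ContinuousMap.restrict (spectrum ℝ a) (ContinuousMap.id ℝ) := by
        ext x; simp
      rw [Subalgebra.mem_centralizer_iff]
      rintro c ⟨rfl⟩
      show b * φ _ = φ _ * b
      have : φ ((Polynomial.toContinuousMapOnAlgHom (spectrum ℝ a)) Polynomial.X) = a := by
        rw [hX]; exact cfcHom_id ha
      rw [this]; exact h
    have htop : T = ⊤ := by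
      rw [← top_le_iff, ← polynomialFunctions.topologicalClosure (spectrum ℝ a)]
      exact Subalgebra.topologicalClosure_minimal hle hTc
    have : g ∈ T := htop ▸ Algebra.mem_top
    rw [Subalgebra.mem_comap, Subalgebra.mem_centralizer_iff] at this
    exact this b rfl
  · rw [cfc_apply_of_not_continuousOn a hf]
    exact Commute.zero_right b

open ContinuousLinearMap in
/-- If `R` and `S` are commuting positive operators then `R S R ≤ ‖R‖ ^ 2 • S`. -/
lemma upper_aux {H : Type*} [NormedAddCommGroup H] [InnerProductSpace ℂ H]
    [CompleteSpace H] (R S : H →L[ℂ] H) (hR : R.IsPositive) (hS : S.IsPositive)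
    (hRS : Commute R S) : ((‖R‖ ^ 2 : ℝ) • S - R * S * R).IsPositive := by
  have hSnn : (0 : H →L[ℂ] H) ≤ S := (nonneg_iff_isPositive S).mpr hS
  obtain ⟨T, hTsa, hTT, hRT⟩ :
      ∃ T : H →L[ℂ] H, IsSelfAdjoint T ∧ T * T = S ∧ Commute R T := by
    refine ⟨cfc Real.sqrt S, cfc_predicate Real.sqrt S, ?_, ?_⟩
    · rw [← cfc_mul Real.sqrt Real.sqrt S]
      have h1 : cfc (fun x : ℝ => Real.sqrt x * Real.sqrt x) S = cfc (id : ℝ → ℝ) S :=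
        cfc_congr fun x hx => Real.mul_self_sqrt (spectrum_nonneg_of_nonneg hSnn hx)
      rw [h1, cfc_id ℝ S hS.isSelfAdjoint]
    · exact commute_cfc_aux hS.isSelfAdjoint hRS Real.sqrt
  set M : H →L[ℂ] H := (‖R‖ ^ 2 : ℝ) • 1 - R * R with hM
  have hMpos : M.IsPositive := by
    constructor
    · have h := hR.isSelfAdjoint.star_eq
      rw [← ContinuousLinearMap.isSelfAdjoint_iff_isSymmetric, hM, IsSelfAdjoint, star_sub, star_smul, star_mul, star_one, h, star_trivial]
    · intro x
      have hRx : inner ℂ (R (R x)) x = (inner ℂ (R x) (R x) : ℂ) := by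
        nth_rewrite 1 [← hR.isSelfAdjoint.adjoint_eq]
        exact ContinuousLinearMap.adjoint_inner_left R x (R x)
      have : M.reApplyInnerSelf x = ‖R‖ ^ 2 * ‖x‖ ^ 2 - ‖R x‖ ^ 2 := by
        simp only [ContinuousLinearMap.reApplyInnerSelf, hM, ContinuousLinearMap.sub_apply,
          ContinuousLinearMap.smul_apply, ContinuousLinearMap.one_apply, mul_apply_eq_comp,
          inner_sub_left, hRx, Complex.sub_re]
        rw [RCLike.real_smul_eq_coe_smul (K := ℂ), inner_smul_left]
        have h1 := inner_self_eq_norm_sq (𝕜 := ℂ) x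
        have h2 := inner_self_eq_norm_sq (𝕜 := ℂ) (R x)
        simp only [RCLike.re_to_complex] at h1 h2
        simp [h1, h2, Complex.mul_re, ← Complex.ofReal_pow]
      rw [this]
      have h1 : ‖R x‖ ≤ ‖R‖ * ‖x‖ := R.le_opNorm x
      nlinarith [norm_nonneg (R x), norm_nonneg R, norm_nonneg x]
  have key : R * S * R = T * (R * R) * T := by
    have h1 : Commute T (R * R) := hRT.symm.mul_right hRT.symm
    calc R * S * R = S * R * R := by rw [hRS.eq]
      _ = S * (R * R) := by rw [mul_assoc]
      _ = (R * R) * S := (hRS.symm.mul_right hRS.symm).eq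
      _ = (R * R) * (T * T) := by rw [hTT]
      _ = T * (R * R) * T := by rw [← mul_assoc, ← h1.eq]
  have hconj : (T ∘L M ∘L T).IsPositive := by
    have := hMpos.conj_adjoint T
    rwa [hTsa.adjoint_eq] at this
  have heq : T ∘L M ∘L T = (‖R‖ ^ 2 : ℝ) • S - R * S * R := by
    show T * M * T = _
    rw [hM, key, mul_sub, sub_mul, mul_smul_comm, smul_mul_assoc, mul_one, hTT, mul_assoc]
  rwa [heq] at hconj

open ContinuousLinearMap in
/-- If `S` is a projection and `R S R ≤ ‖R‖ ^ 2 • S`, then `R` and `S` commute. -/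
lemma converse_aux {H : Type*} [NormedAddCommGroup H] [InnerProductSpace ℂ H] [CompleteSpace H]
    (R S : H →L[ℂ] H) (hR : R.IsPositive) (hS : S.IsPositive)
    (hidem : IsIdempotentElem S)
    (hP : (((‖R‖ ^ 2 : ℝ) • S - R * S * R)).IsPositive) : Commute R S := by
  have hRsa := hR.isSelfAdjoint.adjoint_eq
  have hSsa := hS.isSelfAdjoint.adjoint_eq
  have hid : ∀ x : H, S (S x) = S x := by
    intro x
    have := congrFun (congrArg DFunLike.coe hidem.eq) x
    simpa [mul_apply] using this
  -- step a: S x = 0 → S (R x) = 0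
  have ha : ∀ x : H, S x = 0 → S (R x) = 0 := by
    intro x hx
    have h0 := hP.2 x
    have hval : ((‖R‖ ^ 2 : ℝ) • S - R * S * R).reApplyInnerSelf x = -‖S (R x)‖ ^ 2 := by
      simp only [reApplyInnerSelf, sub_apply, smul_apply, mul_apply_eq_comp, hx, smul_zero, zero_sub,
        inner_neg_left, Complex.neg_re, neg_inj]
      have e1 : inner ℂ (R (S (R x))) x = (inner ℂ (S (R x)) (R x) : ℂ) := by
        nth_rewrite 1 [← hRsa]
        exact adjoint_inner_left R x (S (R x))
      have e2 : inner ℂ (S (R x)) (R x) = (inner ℂ (S (R x)) (S (R x)) : ℂ) := by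
        have e2' := adjoint_inner_left S (R x) (S (R x))
        rwa [hSsa, hid (R x)] at e2'
      rw [e1, e2]
      have := inner_self_eq_norm_sq (𝕜 := ℂ) (S (R x))
      simpa [RCLike.re_to_complex] using this
    rw [hval] at h0
    have : ‖S (R x)‖ ^ 2 = 0 := le_antisymm (by linarith) (by positivity)
    simpa [pow_eq_zero_iff] using this
  -- step b: S v = v → S (R v) = R v
  have hb : ∀ v : H, S v = v → S (R v) = R v := by
    intro v hv
    set w := R v - S (R v) with hw
    have hSw : S w = 0 := by simp [hw, map_sub, hid (R v)]
    have hSRw : S (R w) = 0 := ha w hSw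
    have hnw : (inner ℂ w w : ℂ) = 0 := by
      nth_rewrite 1 [hw]
      rw [inner_sub_left]
      have e2 : inner ℂ (S (R v)) w = (0 : ℂ) := by
        rw [← hSsa, adjoint_inner_left S w (R v)]
        simp [hSw]
      have e1 : inner ℂ (R v) w = (0 : ℂ) := by
        nth_rewrite 1 [← hRsa]
        rw [adjoint_inner_left R w v]
        nth_rewrite 1 [← hv]
        rw [← hSsa, adjoint_inner_left S (R w) v]
        simp [hSRw]
      rw [e1, e2, sub_zero]
    have hw0 : w = 0 := inner_self_eq_zero.mp hnw
    have h5 : R v - S (R v) = 0 := by rw [← hw]; exact hw0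
    exact (sub_eq_zero.mp h5).symm
  -- step c: conclude
  have hc : ∀ x : H, S (R x) = R (S x) := by
    intro x
    have h1 : S (x - S x) = 0 := by simp [map_sub, hid x]
    have h2 : S (R (x - S x)) = 0 := ha _ h1
    have h3 : S (R (S x)) = R (S x) := hb (S x) (hid x)
    have h4 : R x = R (S x) + R (x - S x) := by rw [← map_add]; congr 1; abel
    rw [h4, map_add, h3, h2, add_zero]
  exact ContinuousLinearMap.ext fun x => by simp [mul_apply, (hc x).symm]

/-- If $R,S$ are commuting positive operators then $0\le RSR\le\|R\|^2S$; moreover,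
when $S$ is an (orthogonal) projection, $RSR\le\|R\|^2S$ holds iff $R$ and $S$ commute. -/
theorem commuting_positive_RSR {H : Type*} [NormedAddCommGroup H] [InnerProductSpace ℂ H]
    [CompleteSpace H] (R S : H →L[ℂ] H) (hR : R.IsPositive) (hS : S.IsPositive) :
    (Commute R S →
      (R * S * R).IsPositive ∧ ((‖R‖ ^ 2 : ℝ) • S - R * S * R).IsPositive) ∧
    (IsIdempotentElem S →
      (((‖R‖ ^ 2 : ℝ) • S - R * S * R).IsPositive ↔ Commute R S)) := by
  constructor
  · intro hRS
    refine ⟨?_, upper_aux R S hR hS hRS⟩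
    have := hS.conj_adjoint R
    rwa [hR.isSelfAdjoint.adjoint_eq] at this
  · intro hidem
    exact ⟨fun hP => converse_aux R S hR hS hidem hP, fun hRS => upper_aux R S hR hS hRS⟩
end
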